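/- arXiv:1402.4112 — 3 statements merged into one kernel-verified Lean document; each statement's English description precedes it below -/
import Mathlib

section
/- Let A be a finite nonempty alphabet, E ⊆ W(A), and 𝐬 an infinite sequence of variable words over A such that E is large in 𝐬. Then there exists an infinite extracted subsequence (w_n(x))_{n=0}^∞ of 𝐬 such that, setting F_n = ⟨(w_i(x))_{i=0}^n⟩_c for each n ∈ ℕ, the set E ∩ E_{F_n} is large in (w_i(x))_{i=n+1}^∞ for all n ∈ ℕ. -/
/- Words over an alphabet are `List α`.  The variable symbol `x` is modelled by
`none : Option α`, and variable words are lists over `Option α` containing `none`. -/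

namespace HJ

variable {α : Type*}

/-- Substitution of the letter `a` for every occurrence of the variable in a
variable word, producing a constant word. -/
def substC (s : List (Option α)) (a : α) : List α :=
  s.map (fun b => b.getD a)

/-- Substitution of `b ∈ A ∪ {x}` (a letter `some a` or the variable `none`)
for every occurrence of the variable. -/
def substV (s : List (Option α)) (b : Option α) : List (Option α) :=
  s.map (fun c => Option.elim c b some)

/-- `s` is a variable word over the alphabet `S`: all its letters lie in `S`
and it contains at least one occurrence of the variable. -/
def IsVarWord (S : Set α) (s : List (Option α)) : Prop :=
  (∀ a : α, some a ∈ s → a ∈ S) ∧ none ∈ s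

/-- `W(S)`: the set of (constant) words over the alphabet `S`. -/
def WordsOver (S : Set α) : Set (List α) :=
  { w | ∀ a ∈ w, a ∈ S }

/-- The constant span of the sequence `s` of variable words, with indices
restricted to `I` and the letter substituted at position `l i` taken from the
alphabet `B (l i)`: all concatenations `s_{l_0}(a_0) ⋯ s_{l_n}(a_n)` with
`l_0 < ⋯ < l_n` in `I` and `a_i ∈ B (l_i)`. -/
def constSpan (B : ℕ → Set α) (s : ℕ → List (Option α)) (I : Set ℕ) :
    Set (List α) :=
  { w | ∃ (n : ℕ) (l : Fin (n + 1) → ℕ) (a : Fin (n + 1) → α),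
      StrictMono l ∧ (∀ i, l i ∈ I) ∧ (∀ i, a i ∈ B (l i)) ∧
      w = (List.ofFn fun i => substC (s (l i)) (a i)).flatten }

/-- The variable span of the sequence `s` of variable words, with indices
restricted to `I` and alphabets given by `B`: all concatenations
`s_{l_0}(b_0) ⋯ s_{l_n}(b_n)` with `l_0 < ⋯ < l_n` in `I` and
`b_i ∈ B (l_i) ∪ {x}` which contain at least one occurrence of the variable. -/
def varSpan (B : ℕ → Set α) (s : ℕ → List (Option α)) (I : Set ℕ) :
    Set (List (Option α)) :=
  { w | ∃ (n : ℕ) (l : Fin (n + 1) → ℕ) (b : Fin (n + 1) → Option α),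
      StrictMono l ∧ (∀ i, l i ∈ I) ∧
      (∀ i, ∀ a : α, b i = some a → a ∈ B (l i)) ∧
      none ∈ w ∧
      w = (List.ofFn fun i => substV (s (l i)) (b i)).flatten }

/-- `(t_0, …, t_l)` is a finite extracted subsequence of `s` (with alphabets `B`):
there are `0 = m_0 < m_1 < ⋯` with `t_i` in the variable span of
`(s_n)_{n = m_i}^{m_{i+1} - 1}` (with alphabets `B`) for all `i ≤ l`. -/
def ExtractedFin (B : ℕ → Set α) (s t : ℕ → List (Option α)) (l : ℕ) : Prop :=
  ∃ m : ℕ → ℕ, m 0 = 0 ∧ StrictMono m ∧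
    ∀ i ≤ l, t i ∈ varSpan B s (Set.Ico (m i) (m (i + 1)))

/-- `t` is an infinite extracted subsequence of `s` (with alphabets `B`). -/
def Extracted (B : ℕ → Set α) (s t : ℕ → List (Option α)) : Prop :=
  ∀ l : ℕ, ExtractedFin B s t l

/-- `E` is large in `s` (with alphabets `B`): `E` meets the constant span of
every infinite extracted subsequence of `s`. -/
def IsLarge (B : ℕ → Set α) (E : Set (List α)) (s : ℕ → List (Option α)) : Prop :=
  ∀ w : ℕ → List (Option α), Extracted B s w →
    (E ∩ constSpan B w Set.univ).Nonempty

/-- `E_F = {z ∈ W(S) : w ++ z ∈ E for every w ∈ F}`. -/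
def wordQuot (S : Set α) (E F : Set (List α)) : Set (List α) :=
  { z | z ∈ WordsOver S ∧ ∀ w ∈ F, w ++ z ∈ E }

end HJ


namespace HJAux
open HJ

variable {α : Type*}

/-! ### Substitution lemmas -/

lemma substV_append (u v : List (Option α)) (c : Option α) :
    substV (u ++ v) c = substV u c ++ substV v c := List.map_append

lemma substC_append (u v : List (Option α)) (a : α) :
    substC (u ++ v) a = substC u a ++ substC v a := List.map_append

lemma substV_flatten (L : List (List (Option α))) (c : Option α) :
    substV L.flatten c = (L.map (substV · c)).flatten := by
  simp [substV, List.map_flatten]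

lemma substV_substV (w : List (Option α)) (b c : Option α) :
    substV (substV w b) c = substV w (Option.elim b c some) := by
  simp only [substV, List.map_map]
  congr 1
  funext d
  cases d <;> cases b <;> rfl

lemma substC_substV (w : List (Option α)) (b : Option α) (a : α) :
    substC (substV w b) a = substC w (b.getD a) := by
  simp only [substC, substV, List.map_map]
  congr 1
  funext d
  cases d <;> cases b <;> rfl

lemma map_some_substC (w : List (Option α)) (a : α) :
    (substC w a).map some = substV w (some a) := by
  simp only [substC, substV, List.map_map]
  congr 1
  funext d
  cases d <;> rfl

lemma substV_none (w : List (Option α)) : substV w none = w := by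
  have : w.map (fun c => Option.elim c none some) = w.map id := by
    apply List.map_congr_left; intro d _; cases d <;> rfl
  simp only [substV, this, List.map_id]

lemma none_not_mem_substV_some (w : List (Option α)) (a : α) :
    none ∉ substV w (some a) := by
  simp only [substV, List.mem_map, not_exists]
  rintro d ⟨-, hd⟩
  cases d <;> simp at hd

lemma none_not_mem_map_some (z : List α) : (none : Option α) ∉ z.map some := by
  simp

/-! ### `mSpan` : common generalization of constant and variable span inside
`List (Option α)`. -/

def mSpan (A : Finset α) (t : ℕ → List (Option α)) (I : Set ℕ) :
    Set (List (Option α)) :=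
  { w | ∃ (n : ℕ) (l : Fin (n + 1) → ℕ) (b : Fin (n + 1) → Option α),
      StrictMono l ∧ (∀ i, l i ∈ I) ∧ (∀ i a, b i = some a → a ∈ A) ∧
      w = (List.ofFn fun i => substV (t (l i)) (b i)).flatten }

lemma mSpan_mono {A : Finset α} {t : ℕ → List (Option α)} {I J : Set ℕ}
    (h : I ⊆ J) : mSpan A t I ⊆ mSpan A t J := by
  rintro w ⟨n, l, b, h1, h2, h3, h4⟩
  exact ⟨n, l, b, h1, fun i => h (h2 i), h3, h4⟩

lemma mem_varSpan_iff {A : Finset α} {t : ℕ → List (Option α)} {I : Set ℕ}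
    {w : List (Option α)} :
    w ∈ varSpan (fun _ => (A : Set α)) t I ↔ w ∈ mSpan A t I ∧ none ∈ w := by
  constructor
  · rintro ⟨n, l, b, h1, h2, h3, h4, h5⟩
    exact ⟨⟨n, l, b, h1, h2, h3, h5⟩, h4⟩
  · rintro ⟨⟨n, l, b, h1, h2, h3, h5⟩, h4⟩
    exact ⟨n, l, b, h1, h2, h3, h4, h5⟩

lemma strictMono_finAppend {n n' : ℕ} {l : Fin (n + 1) → ℕ} {l' : Fin (n' + 1) → ℕ}
    (hl : StrictMono l) (hl' : StrictMono l') (h : l (Fin.last n) < l' 0) :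
    StrictMono (Fin.append l l') := by
  intro i j hij
  rw [Fin.lt_def] at hij
  induction i using Fin.addCases with
  | left q =>
    induction j using Fin.addCases with
    | left r =>
      rw [Fin.append_left, Fin.append_left]
      simp only [Fin.coe_castAdd] at hij
      exact hl (Fin.lt_def.mpr hij)
    | right r =>
      rw [Fin.append_left, Fin.append_right]
      calc l q ≤ l (Fin.last n) := hl.monotone (Fin.le_last q)
        _ < l' 0 := h
        _ ≤ l' r := hl'.monotone (Fin.zero_le r)
  | right q =>
    induction j using Fin.addCases with
    | left r =>
      exfalso
      simp only [Fin.coe_natAdd, Fin.coe_castAdd] at hij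
      have := r.isLt
      omega
    | right r =>
      rw [Fin.append_right, Fin.append_right]
      simp only [Fin.coe_natAdd] at hij
      exact hl' (Fin.lt_def.mpr (by omega))

lemma finAppend_forall {β : Type*} {n n' : ℕ} (l : Fin (n+1) → ℕ) (l' : Fin (n'+1) → ℕ)
    (b : Fin (n+1) → β) (b' : Fin (n'+1) → β) (P : ℕ → β → Prop)
    (h : ∀ q, P (l q) (b q)) (h' : ∀ q, P (l' q) (b' q)) :
    ∀ i0 : Fin ((n+1)+(n'+1)), P (Fin.append l l' i0) (Fin.append b b' i0) := by
  intro i0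
  induction i0 using Fin.addCases with
  | left q => rw [Fin.append_left, Fin.append_left]; exact h q
  | right q => rw [Fin.append_right, Fin.append_right]; exact h' q

lemma mSpan_append {A : Finset α} {t : ℕ → List (Option α)} {i j k : ℕ}
    {u v : List (Option α)} (hu : u ∈ mSpan A t (Set.Ico i j))
    (hv : v ∈ mSpan A t (Set.Ico j k)) : u ++ v ∈ mSpan A t (Set.Ico i k) := by
  obtain ⟨n, l, b, hl, hlI, hb, rfl⟩ := hu
  obtain ⟨n', l', b', hl', hlI', hb', rfl⟩ := hv
  have hjk : j ≤ k := le_trans (hlI' 0).1 (le_of_lt (hlI' 0).2)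
  have hij' : i ≤ j := le_trans (hlI 0).1 (le_of_lt (hlI 0).2)
  refine ⟨n + 1 + n', (Fin.append l l' : Fin ((n+1)+(n'+1)) → ℕ),
      (Fin.append b b' : Fin ((n+1)+(n'+1)) → Option α),
      strictMono_finAppend hl hl' (lt_of_lt_of_le (hlI (Fin.last n)).2 (hlI' 0).1),
      finAppend_forall l l' b b' (fun x _ => x ∈ Set.Ico i k)
        (fun q => ⟨(hlI q).1, lt_of_lt_of_le (hlI q).2 hjk⟩)
        (fun q => ⟨le_trans hij' (hlI' q).1, (hlI' q).2⟩),
      finAppend_forall l l' b b' (fun _ c => ∀ a, c = some a → a ∈ A)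
        (fun q => hb q) (fun q => hb' q),
      ?_⟩
  have e1 : (List.ofFn fun i0 : Fin (n + 1 + n' + 1) =>
      substV (t (Fin.append l l' i0)) (Fin.append b b' i0))
      = (List.ofFn fun i0 : Fin (n + 1) => substV (t (l i0)) (b i0))
        ++ (List.ofFn fun i0 : Fin (n' + 1) => substV (t (l' i0)) (b' i0)) := by
    refine (List.ofFn_add (f := fun i0 : Fin ((n+1)+(n'+1)) =>
      substV (t (Fin.append l l' i0)) (Fin.append b b' i0))).trans ?_
    congr 1
    · congr 1; funext i0
      exact congrArg₂ (fun x y => substV (t x) y) (Fin.append_left l l' i0) (Fin.append_left b b' i0)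
    · congr 1; funext i0; rw [Fin.append_right, Fin.append_right]
  rw [e1, List.flatten_append]

lemma mSpan_bound {A : Finset α} {t : ℕ → List (Option α)} {i : ℕ}
    {u : List (Option α)} (hu : u ∈ mSpan A t (Set.Ici i)) :
    ∃ j, i < j ∧ u ∈ mSpan A t (Set.Ico i j) := by
  obtain ⟨n, l, b, hl, hlI, hb, rfl⟩ := hu
  refine ⟨l (Fin.last n) + 1, Nat.lt_succ_of_le (le_trans (hlI 0)
    (hl.monotone (Fin.zero_le _))), n, l, b, hl, fun q =>
      ⟨hlI q, Nat.lt_succ_of_le (hl.monotone (Fin.le_last q))⟩, hb, rfl⟩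

lemma substV_single_mem {A : Finset α} {t : ℕ → List (Option α)} {I : Set ℕ}
    {n₀ : ℕ} (hn : n₀ ∈ I) (c : Option α) (hc : ∀ a, c = some a → a ∈ A) :
    substV (t n₀) c ∈ mSpan A t I := by
  refine ⟨0, fun _ => n₀, fun _ => c, ?_, fun _ => hn, fun _ => hc, ?_⟩
  · intro x y hxy
    have hx := x.isLt
    have hy := y.isLt
    have := Fin.lt_def.mp hxy
    omega
  · simp

lemma self_mem_mSpan {A : Finset α} {t : ℕ → List (Option α)} {I : Set ℕ}
    {n₀ : ℕ} (hn : n₀ ∈ I) : t n₀ ∈ mSpan A t I := by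
  have := substV_single_mem (A := A) (t := t) hn none (by simp)
  rwa [substV_none] at this

lemma substV_mem_mSpan {A : Finset α} {t : ℕ → List (Option α)} {I : Set ℕ}
    {u : List (Option α)} (hu : u ∈ mSpan A t I) (c : Option α)
    (hc : ∀ a, c = some a → a ∈ A) : substV u c ∈ mSpan A t I := by
  obtain ⟨n, l, b, hl, hlI, hb, rfl⟩ := hu
  refine ⟨n, l, fun q => Option.elim (b q) c some, hl, hlI, ?_, ?_⟩
  · intro q a ha
    have ha' : Option.elim (b q) c some = some a := ha
    rcases hq : b q with _ | a'
    · rw [hq] at ha'; exact hc a ha'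
    · rw [hq] at ha'; simp at ha'; subst ha'; exact hb q a' hq
  · rw [substV_flatten, List.map_ofFn]
    have : ((substV · c) ∘ fun i => substV (t (l i)) (b i))
        = fun i => substV (t (l i)) (Option.elim (b i) c some) := by
      funext q; exact substV_substV _ _ _
    rw [this]

/-! ### bridges to `constSpan` -/

lemma mapSome_mem_mSpan {A : Finset α} {t : ℕ → List (Option α)} {I : Set ℕ}
    {z : List α} (hz : z ∈ constSpan (fun _ => (A : Set α)) t I) :
    z.map some ∈ mSpan A t I := by
  obtain ⟨n, l, a, hl, hlI, ha, rfl⟩ := hz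
  refine ⟨n, l, fun q => some (a q), hl, hlI, ?_, ?_⟩
  · intro q a' ha'; simp at ha'; subst ha'; exact ha q
  · rw [List.map_flatten, List.map_ofFn]
    have : (List.map some ∘ fun i => substC (t (l i)) (a i))
        = fun i => substV (t (l i)) (some (a i)) := by
      funext q; exact map_some_substC _ _
    rw [this]

lemma constSpan_of_mapSome {A : Finset α} {t : ℕ → List (Option α)} {I : Set ℕ}
    {w : List (Option α)} (ht : ∀ n, none ∈ t n) (hw : w ∈ mSpan A t I)
    (hnone : none ∉ w) :
    ∃ z ∈ constSpan (fun _ => (A : Set α)) t I, w = z.map some := by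
  obtain ⟨n, l, b, hl, hlI, hb, rfl⟩ := hw
  have hbs : ∀ q, ∃ a, b q = some a := by
    intro q
    rcases hq : b q with _ | a'
    · exfalso
      apply hnone
      rw [List.mem_flatten]
      refine ⟨substV (t (l q)) (b q), ?_, ?_⟩
      · rw [List.mem_ofFn]; exact ⟨q, rfl⟩
      · rw [hq, substV_none]; exact ht _
    · exact ⟨a', rfl⟩
  choose a ha using hbs
  refine ⟨(List.ofFn fun q => substC (t (l q)) (a q)).flatten,
    ⟨n, l, a, hl, hlI, fun q => hb q (a q) (ha q), rfl⟩, ?_⟩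
  rw [List.map_flatten, List.map_ofFn]
  have : (List.map some ∘ fun q => substC (t (l q)) (a q))
      = fun q => substV (t (l q)) (b q) := by
    funext q
    rw [Function.comp_apply, map_some_substC, ha q]
  rw [this]


section Ellis

variable {G : Type*} [Semigroup G] [TopologicalSpace G] [CompactSpace G] [T2Space G]

lemma sInter_chain_aux (c : Set (Set G)) (hc : IsChain (· ⊆ ·) c)
    (hcne : c.Nonempty) (h1 : ∀ T ∈ c, T.Nonempty) (h2 : ∀ T ∈ c, IsClosed T) :
    (⋂₀ c).Nonempty := by
  have : Nonempty ↥c := hcne.to_subtype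
  rw [Set.sInter_eq_iInter]
  refine IsCompact.nonempty_iInter_of_directed_nonempty_isCompact_isClosed _
    ?_ (fun i => h1 i i.2) (fun i => (h2 i i.2).isCompact) (fun i => h2 i i.2)
  rintro ⟨i, hi⟩ ⟨j, hj⟩
  rcases hc.total hi hj with h | h
  · exact ⟨⟨i, hi⟩, le_refl _, h⟩
  · exact ⟨⟨j, hj⟩, h, le_refl _⟩

lemma exists_idem (hG : ∀ r : G, Continuous (· * r)) {S : Set G} (hne : S.Nonempty) (hcl : IsClosed S)
    (hmul : ∀ x ∈ S, ∀ y ∈ S, x * y ∈ S) : ∃ p ∈ S, p * p = p := by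
  obtain ⟨T, hTS, hTmin⟩ := zorn_superset_nonempty
      {T : Set G | T.Nonempty ∧ IsClosed T ∧ ∀ x ∈ T, ∀ y ∈ T, x * y ∈ T}
      (fun c hc hchain hcne => ⟨⋂₀ c,
        ⟨sInter_chain_aux c hchain hcne (fun T hT => (hc hT).1) (fun T hT => (hc hT).2.1),
         isClosed_sInter (fun T hT => (hc hT).2.1),
         fun x hx y hy => by
           rw [Set.mem_sInter] at *
           exact fun T hT => (hc hT).2.2 x (hx T hT) y (hy T hT)⟩,
        fun T hT => Set.sInter_subset_of_mem hT⟩)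
      S ⟨hne, hcl, hmul⟩
  obtain ⟨⟨x, hx⟩, hTcl, hTmul⟩ := hTmin.1
  -- T * x = T
  have hKmem : ((· * x) '' T) ∈ {T : Set G | T.Nonempty ∧ IsClosed T ∧
      ∀ x ∈ T, ∀ y ∈ T, x * y ∈ T} := by
    refine ⟨⟨x * x, ⟨x, hx, rfl⟩⟩, (hTcl.isCompact.image (hG x)).isClosed, ?_⟩
    rintro _ ⟨a, ha, rfl⟩ _ ⟨b, hb, rfl⟩
    exact ⟨(a * x) * b, hTmul _ (hTmul a ha x hx) b hb, (mul_assoc _ _ _)⟩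
  have hKsub : ((· * x) '' T) ⊆ T := by
    rintro _ ⟨a, ha, rfl⟩; exact hTmul a ha x hx
  have hKT : ((· * x) '' T) = T :=
    subset_antisymm hKsub (hTmin.2 hKmem hKsub)
  -- P = {y ∈ T | y * x = x}
  have hPne : {y | y ∈ T ∧ y * x = x}.Nonempty := by
    have : x ∈ ((· * x) '' T) := hKT.symm ▸ hx
    obtain ⟨y, hy, hyx⟩ := this
    exact ⟨y, hy, hyx⟩
  have hPmem : {y | y ∈ T ∧ y * x = x} ∈ {T : Set G | T.Nonempty ∧ IsClosed T ∧
      ∀ x ∈ T, ∀ y ∈ T, x * y ∈ T} := by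
    refine ⟨hPne, ?_, ?_⟩
    · have : {y | y ∈ T ∧ y * x = x} = T ∩ ((· * x) ⁻¹' {x}) := rfl
      rw [this]
      exact hTcl.inter (IsClosed.preimage (hG x) isClosed_singleton)
    · rintro a ⟨haT, hax⟩ b ⟨hbT, hbx⟩
      exact ⟨hTmul a haT b hbT, by rw [mul_assoc, hbx, hax]⟩
  have hPT : {y | y ∈ T ∧ y * x = x} = T :=
    subset_antisymm (fun y hy => hy.1) (hTmin.2 hPmem (fun y hy => hy.1))
  have : x ∈ {y | y ∈ T ∧ y * x = x} := hPT.symm ▸ hx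
  exact ⟨x, hTS hx, this.2⟩

lemma exists_minimal_idem (hG : ∀ r : G, Continuous (· * r)) {S : Set G} (hne : S.Nonempty) (hcl : IsClosed S)
    (hmul : ∀ x ∈ S, ∀ y ∈ S, x * y ∈ S) :
    ∃ p ∈ S, p * p = p ∧
      ∀ r ∈ S, r * r = r → r * p = r → p * r = r → r = p := by
  obtain ⟨L, hLS, hLmin⟩ := zorn_superset_nonempty
      {L : Set G | L.Nonempty ∧ IsClosed L ∧ L ⊆ S ∧ ∀ x ∈ S, ∀ y ∈ L, x * y ∈ L}
      (fun c hc hchain hcne => ⟨⋂₀ c,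
        ⟨sInter_chain_aux c hchain hcne (fun T hT => (hc hT).1) (fun T hT => (hc hT).2.1),
         isClosed_sInter (fun T hT => (hc hT).2.1),
         (Set.sInter_subset_of_mem hcne.choose_spec).trans (hc hcne.choose_spec).2.2.1,
         fun x hx y hy => by
           rw [Set.mem_sInter] at *
           exact fun T hT => (hc hT).2.2.2 x hx y (hy T hT)⟩,
        fun T hT => Set.sInter_subset_of_mem hT⟩)
      S ⟨hne, hcl, subset_rfl, hmul⟩
  obtain ⟨hLne, hLcl, hLsubS, hLideal⟩ := hLmin.1
  obtain ⟨u, huL, huu⟩ := exists_idem hG hLne hLcl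
    (fun x hx y hy => hLideal x (hLsubS hx) y hy)
  refine ⟨u, hLsubS huL, huu, ?_⟩
  intro r hrS hrr hru hur
  have hrL : r ∈ L := by
    have := hLideal r hrS u huL
    rwa [hru] at this
  -- S * r is a closed left ideal contained in L
  have hSrmem : ((· * r) '' S) ∈ {L : Set G | L.Nonempty ∧ IsClosed L ∧ L ⊆ S ∧
      ∀ x ∈ S, ∀ y ∈ L, x * y ∈ L} := by
    refine ⟨⟨r * r, ⟨r, hrS, rfl⟩⟩, (hcl.isCompact.image (hG r)).isClosed, ?_, ?_⟩
    · rintro _ ⟨a, ha, rfl⟩; exact hmul a ha r hrS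
    · rintro x hx _ ⟨a, ha, rfl⟩
      exact ⟨x * a, hmul x hx a ha, mul_assoc _ _ _⟩
  have hSrsub : ((· * r) '' S) ⊆ L := by
    rintro _ ⟨a, ha, rfl⟩; exact hLideal a ha r hrL
  have hSrL : ((· * r) '' S) = L := subset_antisymm hSrsub (hLmin.2 hSrmem hSrsub)
  have : u ∈ ((· * r) '' S) := hSrL.symm ▸ huL
  obtain ⟨z, hz, hzu⟩ := this
  have hurr : u * r = u := by
    rw [← hzu, mul_assoc, hrr]
  rw [← hur, hurr]

lemma exists_ideal_idem (hG : ∀ r : G, Continuous (· * r)) {S T : Set G} (hScl : IsClosed S)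
    (hmulS : ∀ x ∈ S, ∀ y ∈ S, x * y ∈ S)
    (hTne : T.Nonempty) (hTcl : IsClosed T) (hTS : T ⊆ S)
    (hTl : ∀ x ∈ S, ∀ y ∈ T, x * y ∈ T) (hTr : ∀ x ∈ S, ∀ y ∈ T, y * x ∈ T)
    {p : G} (hpS : p ∈ S) (hp : p * p = p) :
    ∃ q ∈ T, q * q = q ∧ q * p = q ∧ p * q = q := by
  set L0 := ((· * p) '' S) ∩ T with hL0
  have hL0ne : L0.Nonempty := by
    obtain ⟨t, ht⟩ := hTne
    exact ⟨t * p, ⟨t, hTS ht, rfl⟩, hTr p hpS t ht⟩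
  have hL0cl : IsClosed L0 := ((hScl.isCompact.image (hG p)).isClosed).inter hTcl
  have hL0mul : ∀ x ∈ L0, ∀ y ∈ L0, x * y ∈ L0 := by
    rintro x ⟨⟨a, ha, rfl⟩, hxT⟩ y ⟨⟨b, hb, rfl⟩, hyT⟩
    constructor
    · exact ⟨(a * p) * b, hmulS _ (hmulS a ha p hpS) b hb, (mul_assoc _ _ _)⟩
    · exact hTl _ (hTS hxT) _ hyT
  obtain ⟨u, huL0, huu⟩ := exists_idem hG hL0ne hL0cl hL0mul
  obtain ⟨⟨z, hz, hzu⟩, huT⟩ := huL0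
  have hup : u * p = u := by rw [← hzu, mul_assoc, hp]
  refine ⟨p * u, hTl p hpS u huT, ?_, ?_, ?_⟩
  · calc (p * u) * (p * u) = p * ((u * p) * u) := by rw [mul_assoc, mul_assoc]
      _ = p * u := by rw [hup, huu]
  · rw [mul_assoc, hup]
  · rw [← mul_assoc, hp]

end Ellis


/-! ### Part 4: the ultrafilter semigroup of words -/

attribute [local instance] Ultrafilter.mul Ultrafilter.semigroup

section Words

variable {α : Type*}

local instance listSemigroup : Semigroup (List (Option α)) where
  mul := (· ++ ·)
  mul_assoc := List.append_assoc

lemma lmul_def (u v : List (Option α)) : u * v = u ++ v := rfl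

lemma umul_mem_iff {M : Type*} [Semigroup M] {U V : Ultrafilter M} {X : Set M} :
    X ∈ U * V ↔ {u | {v | u * v ∈ X} ∈ V} ∈ U := by
  have h := Ultrafilter.eventually_mul U V (· ∈ X)
  simp only [Filter.eventually_iff, Ultrafilter.mem_coe] at h
  convert h using 2
  rfl

lemma umap_mul {M : Type*} [Semigroup M] {f : M → M}
    (hf : ∀ x y, f (x * y) = f x * f y) (U V : Ultrafilter M) :
    Ultrafilter.map f (U * V) = Ultrafilter.map f U * Ultrafilter.map f V := by
  have key : ∀ X : Set M, X ∈ Ultrafilter.map f (U * V) ↔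
      X ∈ (Ultrafilter.map f U * Ultrafilter.map f V) := by
    intro X
    rw [Ultrafilter.mem_map, umul_mem_iff, umul_mem_iff, Ultrafilter.mem_map]
    have hset : f ⁻¹' {u' | {v' | u' * v' ∈ X} ∈ Ultrafilter.map f V}
        = {u | {v | u * v ∈ f ⁻¹' X} ∈ V} := by
      ext u
      rw [Set.mem_preimage, Set.mem_setOf_eq, Ultrafilter.mem_map, Set.mem_setOf_eq]
      have h2 : f ⁻¹' {v' | f u * v' ∈ X} = {v | u * v ∈ f ⁻¹' X} := by
        ext v
        simp only [Set.mem_preimage, Set.mem_setOf_eq, hf u v]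
      rw [h2]
    rw [hset]
  exact Ultrafilter.coe_injective (Filter.ext fun X => by
    rw [Ultrafilter.mem_coe, Ultrafilter.mem_coe]; exact key X)

lemma continuous_umap {X Y : Type*} (f : X → Y) :
    Continuous (Ultrafilter.map f) :=
  ultrafilterBasis_is_basis.continuous_iff.2 <| Set.forall_mem_range.mpr fun s => by
    have h : (Ultrafilter.map f) ⁻¹' {u : Ultrafilter Y | s ∈ u}
        = {u : Ultrafilter X | f ⁻¹' s ∈ u} := by
      ext u; simp [Ultrafilter.mem_map]
    rw [h]
    exact ultrafilter_isOpen_basic _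

variable (A : Finset α) (s : ℕ → List (Option α))

/-- constant-like words in the span of the tail of `s` past `n`. -/
def CS (n : ℕ) : Set (List (Option α)) :=
  {u | u ∈ mSpan A s (Set.Ici n) ∧ none ∉ u}

/-- variable words in the span of the tail of `s` past `n`. -/
def VS (n : ℕ) : Set (List (Option α)) :=
  {u | u ∈ mSpan A s (Set.Ici n) ∧ none ∈ u}

/-- ultrafilters concentrating on constant words of every tail. -/
def UC : Set (Ultrafilter (List (Option α))) := {q | ∀ n, CS A s n ∈ q}

/-- ultrafilters concentrating on variable words of every tail. -/
def UV : Set (Ultrafilter (List (Option α))) := {q | ∀ n, VS A s n ∈ q}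

lemma mSpan_Ici_mul (n : ℕ) {u : List (Option α)} (hu : u ∈ mSpan A s (Set.Ici n)) :
    ∃ j, ∀ v ∈ mSpan A s (Set.Ici j), u ++ v ∈ mSpan A s (Set.Ici n) := by
  obtain ⟨j, hnj, hu'⟩ := mSpan_bound hu
  refine ⟨j, fun v hv => ?_⟩
  obtain ⟨k, hjk, hv'⟩ := mSpan_bound hv
  exact mSpan_mono Set.Ico_subset_Ici_self (mSpan_append hu' hv')

lemma mul_mem_UF {q q' : Ultrafilter (List (Option α))} {P Q R : ℕ → Set (List (Option α))}
    (hP : ∀ n, P n ∈ q) (hQ : ∀ n, Q n ∈ q')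
    (h : ∀ n, ∀ u ∈ P n, ∃ j, ∀ v ∈ Q j, u ++ v ∈ R n) : ∀ n, R n ∈ q * q' := by
  intro n
  rw [umul_mem_iff]
  refine Filter.mem_of_superset (hP n) ?_
  intro u hu
  obtain ⟨j, hj⟩ := h n u hu
  exact Filter.mem_of_superset (hQ j) (fun v hv => hj v hv)

lemma UC_mul_UC {q q' : Ultrafilter (List (Option α))} (hq : q ∈ UC A s)
    (hq' : q' ∈ UC A s) : q * q' ∈ UC A s :=
  mul_mem_UF hq hq' (fun n u hu => by
    obtain ⟨j, hj⟩ := mSpan_Ici_mul A s n hu.1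
    exact ⟨j, fun v hv => ⟨hj v hv.1, by
      rw [List.mem_append]; rintro (h | h); exacts [hu.2 h, hv.2 h]⟩⟩)

lemma UV_mul_UV {q q' : Ultrafilter (List (Option α))} (hq : q ∈ UV A s)
    (hq' : q' ∈ UV A s) : q * q' ∈ UV A s :=
  mul_mem_UF hq hq' (fun n u hu => by
    obtain ⟨j, hj⟩ := mSpan_Ici_mul A s n hu.1
    exact ⟨j, fun v hv => ⟨hj v hv.1, by rw [List.mem_append]; exact Or.inl hu.2⟩⟩)

lemma UV_mul_UC {q q' : Ultrafilter (List (Option α))} (hq : q ∈ UV A s)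
    (hq' : q' ∈ UC A s) : q * q' ∈ UV A s :=
  mul_mem_UF hq hq' (fun n u hu => by
    obtain ⟨j, hj⟩ := mSpan_Ici_mul A s n hu.1
    exact ⟨j, fun v hv => ⟨hj v hv.1, by rw [List.mem_append]; exact Or.inl hu.2⟩⟩)

lemma UC_mul_UV {q q' : Ultrafilter (List (Option α))} (hq : q ∈ UC A s)
    (hq' : q' ∈ UV A s) : q * q' ∈ UV A s :=
  mul_mem_UF hq hq' (fun n u hu => by
    obtain ⟨j, hj⟩ := mSpan_Ici_mul A s n hu.1
    exact ⟨j, fun v hv => ⟨hj v hv.1, by rw [List.mem_append]; exact Or.inr hv.2⟩⟩)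

lemma isClosed_UC : IsClosed (UC A s) := by
  have : UC A s = ⋂ n, {q : Ultrafilter (List (Option α)) | CS A s n ∈ q} := by
    ext q; simp [UC, Set.mem_iInter]
  rw [this]
  exact isClosed_iInter (fun n => ultrafilter_isClosed_basic _)

lemma isClosed_UV : IsClosed (UV A s) := by
  have : UV A s = ⋂ n, {q : Ultrafilter (List (Option α)) | VS A s n ∈ q} := by
    ext q; simp [UV, Set.mem_iInter]
  rw [this]
  exact isClosed_iInter (fun n => ultrafilter_isClosed_basic _)

lemma antitone_aux {X : ℕ → Set (List (Option α))}
    (hX : ∀ m n, m ≤ n → X n ⊆ X m) (hne : ∀ n, (X n).Nonempty) :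
    ∃ q : Ultrafilter (List (Option α)), ∀ n, X n ∈ q := by
  have hd : Directed (· ≥ ·) (fun n => (Filter.principal (X n))) := by
    intro m n
    exact ⟨max m n, Filter.principal_mono.2 (hX m _ (le_max_left m n)),
      Filter.principal_mono.2 (hX n _ (le_max_right m n))⟩
  have hb : ∀ n, Filter.NeBot (Filter.principal (X n)) :=
    fun n => Filter.principal_neBot_iff.2 (hne n)
  have : Filter.NeBot (⨅ n, Filter.principal (X n)) :=
    Filter.iInf_neBot_of_directed hd hb
  obtain ⟨q, hq⟩ := Ultrafilter.exists_le (⨅ n, Filter.principal (X n))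
  exact ⟨q, fun n => hq (Filter.mem_iInf_of_mem n (Filter.mem_principal_self _))⟩

lemma CS_antitone : ∀ m n, m ≤ n → CS A s n ⊆ CS A s m := by
  intro m n h u hu
  exact ⟨mSpan_mono (Set.Ici_subset_Ici.2 h) hu.1, hu.2⟩

lemma VS_antitone : ∀ m n, m ≤ n → VS A s n ⊆ VS A s m := by
  intro m n h u hu
  exact ⟨mSpan_mono (Set.Ici_subset_Ici.2 h) hu.1, hu.2⟩

lemma CS_nonempty (hA : A.Nonempty) : ∀ n, (CS A s n).Nonempty := by
  intro n
  obtain ⟨a, ha⟩ := hA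
  refine ⟨substV (s n) (some a), substV_single_mem (Set.mem_Ici.2 le_rfl) _ ?_, ?_⟩
  · intro a' ha'; simp at ha'; subst ha'; exact ha
  · exact none_not_mem_substV_some _ _

lemma VS_nonempty (hs : ∀ n, HJ.IsVarWord (A : Set α) (s n)) : ∀ n, (VS A s n).Nonempty :=
  fun n => ⟨s n, self_mem_mSpan (Set.mem_Ici.2 le_rfl), (hs n).2⟩

lemma UC_nonempty (hA : A.Nonempty) : (UC A s).Nonempty := by
  obtain ⟨q, hq⟩ := antitone_aux (CS_antitone A s) (CS_nonempty A s hA)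
  exact ⟨q, hq⟩

lemma UV_nonempty (hs : ∀ n, HJ.IsVarWord (A : Set α) (s n)) : (UV A s).Nonempty := by
  obtain ⟨q, hq⟩ := antitone_aux (VS_antitone A s) (VS_nonempty A s hs)
  exact ⟨q, hq⟩

/-- substitution of the letter `a` for the variable -/
def sig (a : α) : List (Option α) → List (Option α) := fun u => substV u (some a)

lemma sig_mul (a : α) (u v : List (Option α)) : sig a (u * v) = sig a u * sig a v :=
  substV_append u v (some a)

lemma sig_fixes {a : α} {u : List (Option α)} (hu : none ∉ u) : sig a u = u := by
  have : u.map (fun c => Option.elim c (some a) some) = u.map id := by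
    apply List.map_congr_left
    intro d hd
    cases d with
    | none => exact absurd hd hu
    | some b => rfl
  simp only [sig, substV, this, List.map_id]

lemma umap_sig_of_UC {a : α} {q : Ultrafilter (List (Option α))} (hq : q ∈ UC A s) :
    Ultrafilter.map (sig a) q = q := by
  apply Ultrafilter.coe_injective
  rw [Ultrafilter.coe_map]
  have hev : (sig a) =ᶠ[(q : Filter (List (Option α)))] id := by
    refine Filter.eventually_of_mem (Ultrafilter.mem_coe.2 (hq 0)) ?_
    intro u hu
    exact sig_fixes hu.2
  rw [Filter.map_congr hev, Filter.map_id]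

lemma umap_sig_mem_UC {a : α} (ha : a ∈ A) {q : Ultrafilter (List (Option α))}
    (hq : q ∈ UV A s) : Ultrafilter.map (sig a) q ∈ UC A s := by
  intro n
  rw [Ultrafilter.mem_map]
  refine Filter.mem_of_superset (hq n) ?_
  intro u hu
  refine ⟨substV_mem_mSpan hu.1 (some a) ?_, none_not_mem_substV_some _ _⟩
  intro a' ha'; simp at ha'; subst ha'; exact ha

/-- The key existence result: an idempotent `p` on constant words and an
ultrafilter `W` on variable words all of whose letter substitutions equal `p`. -/
lemma exists_p_W (hs : ∀ n, HJ.IsVarWord (A : Set α) (s n)) (hA : A.Nonempty) : ∃ (p W : Ultrafilter (List (Option α))), p * p = p ∧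
    (∀ n, VS A s n ∈ W) ∧ ∀ a ∈ A, Ultrafilter.map (sig a) W = p := by
  classical
  have hGmul : ∀ r : Ultrafilter (List (Option α)), Continuous (· * r) :=
    fun r => Ultrafilter.continuous_mul_left r
  -- a minimal idempotent in UC
  obtain ⟨p, hpUC, hpp, hpmin⟩ := exists_minimal_idem hGmul (UC_nonempty A s hA)
    (isClosed_UC A s) (fun x hx y hy => UC_mul_UC A s hx hy)
  -- the product space
  have hAne : Nonempty {a // a ∈ A} := ⟨⟨hA.choose, hA.choose_spec⟩⟩
  set Y := ({a // a ∈ A} → Ultrafilter (List (Option α))) with hY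
  have hGY : ∀ r : Y, Continuous (· * r) := by
    intro r
    apply continuous_pi
    intro a
    exact (Ultrafilter.continuous_mul_left (r a)).comp (continuous_apply a)
  set Phi : Ultrafilter (List (Option α)) → Y :=
    (fun q a => Ultrafilter.map (sig a.1) q) with hPhi
  set Del : Ultrafilter (List (Option α)) → Y := (fun q _ => q) with hDel
  have hPhiCont : Continuous Phi := continuous_pi (fun a => continuous_umap _)
  have hDelCont : Continuous Del := continuous_pi (fun a => continuous_id)
  have hPhiMul : ∀ q q', Phi (q * q') = Phi q * Phi q' := by
    intro q q'
    funext a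
    exact umap_mul (sig_mul a.1) q q'
  have hDelMul : ∀ q q', Del (q * q') = Del q * Del q' := fun q q' => rfl
  set T : Set Y := Phi '' (UV A s) with hT
  set D : Set Y := Del '' (UC A s) with hD
  have hTcl : IsClosed T := ((isClosed_UV A s).isCompact.image hPhiCont).isClosed
  have hDcl : IsClosed D := ((isClosed_UC A s).isCompact.image hDelCont).isClosed
  have hPhiDel : ∀ q ∈ UV A s, ∀ r ∈ UC A s, Phi q * Del r = Phi (q * r) := by
    intro q hq r hr
    funext a
    show Ultrafilter.map (sig a.1) q * r = Ultrafilter.map (sig a.1) (q * r)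
    rw [umap_mul (sig_mul a.1) q r, umap_sig_of_UC A s hr]
  have hDelPhi : ∀ r ∈ UC A s, ∀ q ∈ UV A s, Del r * Phi q = Phi (r * q) := by
    intro r hr q hq
    funext a
    show r * Ultrafilter.map (sig a.1) q = Ultrafilter.map (sig a.1) (r * q)
    rw [umap_mul (sig_mul a.1) r q, umap_sig_of_UC A s hr]
  have hmulS : ∀ x ∈ T ∪ D, ∀ y ∈ T ∪ D, x * y ∈ T ∪ D := by
    rintro x (⟨q, hq, rfl⟩ | ⟨q, hq, rfl⟩) y (⟨r, hr, rfl⟩ | ⟨r, hr, rfl⟩)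
    · exact Or.inl ⟨q * r, UV_mul_UV A s hq hr, hPhiMul q r⟩
    · exact Or.inl ⟨q * r, UV_mul_UC A s hq hr, (hPhiDel q hq r hr).symm⟩
    · exact Or.inl ⟨q * r, UC_mul_UV A s hq hr, (hDelPhi q hq r hr).symm⟩
    · exact Or.inr ⟨q * r, UC_mul_UC A s hq hr, rfl⟩
  have hTl : ∀ x ∈ T ∪ D, ∀ y ∈ T, x * y ∈ T := by
    rintro x (⟨q, hq, rfl⟩ | ⟨q, hq, rfl⟩) y ⟨r, hr, rfl⟩
    · exact ⟨q * r, UV_mul_UV A s hq hr, hPhiMul q r⟩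
    · exact ⟨q * r, UC_mul_UV A s hq hr, (hDelPhi q hq r hr).symm⟩
  have hTr : ∀ x ∈ T ∪ D, ∀ y ∈ T, y * x ∈ T := by
    rintro x (⟨q, hq, rfl⟩ | ⟨q, hq, rfl⟩) y ⟨r, hr, rfl⟩
    · exact ⟨r * q, UV_mul_UV A s hr hq, hPhiMul r q⟩
    · exact ⟨r * q, UV_mul_UC A s hr hq, (hPhiDel r hr q hq).symm⟩
  have hTne : T.Nonempty := (UV_nonempty A s hs).image Phi
  obtain ⟨qq, hqqT, hqq, hqqp, hpqq⟩ := exists_ideal_idem hGY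
    (hTcl.union hDcl) hmulS hTne hTcl Set.subset_union_left hTl hTr
    (Or.inr ⟨p, hpUC, rfl⟩) (by rw [← hDelMul, hpp])
  obtain ⟨W, hWUV, hWq⟩ := hqqT
  refine ⟨p, W, hpp, hWUV, ?_⟩
  intro a ha
  have hcoordW : Ultrafilter.map (sig a) W = qq ⟨a, ha⟩ := congrFun hWq ⟨a, ha⟩
  have h1 : qq ⟨a, ha⟩ * qq ⟨a, ha⟩ = qq ⟨a, ha⟩ := congrFun hqq ⟨a, ha⟩
  have h2 : qq ⟨a, ha⟩ * p = qq ⟨a, ha⟩ := congrFun hqqp ⟨a, ha⟩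
  have h3 : p * qq ⟨a, ha⟩ = qq ⟨a, ha⟩ := congrFun hpqq ⟨a, ha⟩
  rw [hcoordW]
  refine hpmin _ ?_ h1 h2 h3
  rw [← hcoordW]
  exact umap_sig_mem_UC A s ha hWUV

/-! ### Part 5 : the Galvin–Glazer construction -/

lemma GG {p W : Ultrafilter (List (Option α))} (hp : p * p = p)
    (hW : ∀ n, VS A s n ∈ W)
    (hmap : ∀ a ∈ A, Ultrafilter.map (sig a) W = p)
    (D0 : Set (List (Option α))) (hD0 : D0 ∈ p) :
    ∃ (w : ℕ → List (Option α)) (m : ℕ → ℕ), m 0 = 0 ∧ StrictMono m ∧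
      (∀ n, w n ∈ mSpan A s (Set.Ico (m n) (m (n + 1))) ∧ none ∈ w n) ∧
      (∀ (k : ℕ) (l : Fin (k + 1) → ℕ) (a : Fin (k + 1) → α), StrictMono l →
        (∀ i, a i ∈ A) →
        (List.ofFn fun i => substV (w (l i)) (some (a i))).flatten ∈ D0) := by
  classical
  have step : ∀ (mm : ℕ) (D : Set (List (Option α))), D ∈ p →
      ∃ (v : List (Option α)) (j : ℕ) (D' : Set (List (Option α))),
        mm < j ∧ v ∈ mSpan A s (Set.Ico mm j) ∧ none ∈ v ∧ D' ∈ p ∧ D' ⊆ D ∧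
        (∀ a ∈ A, substV v (some a) ∈ D) ∧
        (∀ a ∈ A, ∀ u ∈ D', substV v (some a) ++ u ∈ D) := by
    intro mm D hD
    have hDstar : {x | {u : List (Option α) | x ++ u ∈ D} ∈ p} ∈ p := by
      have h1 : D ∈ p * p := by rw [hp]; exact hD
      rw [umul_mem_iff] at h1
      exact h1
    have hgood : {v | ∀ a ∈ A, substV v (some a) ∈ D ∧
        {u | substV v (some a) ++ u ∈ D} ∈ p} ∈ W := by
      have heq : {v | ∀ a ∈ A, substV v (some a) ∈ D ∧
          {u | substV v (some a) ++ u ∈ D} ∈ p}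
          = ⋂ a ∈ (A : Set α),
            ((sig a) ⁻¹' D ∩ (sig a) ⁻¹' {x | {u : List (Option α) | x ++ u ∈ D} ∈ p}) := by
        ext v
        simp only [Set.mem_setOf_eq, Set.mem_iInter, Set.mem_inter_iff, Set.mem_preimage,
          Finset.mem_coe]
        exact ⟨fun h a ha => h a ha, fun h a ha => h a ha⟩
      rw [heq]
      refine (Filter.biInter_mem A.finite_toSet).2 ?_
      intro a ha
      refine Filter.inter_mem ?_ ?_
      · have h2 : D ∈ Ultrafilter.map (sig a) W := by rw [hmap a ha]; exact hD
        rwa [Ultrafilter.mem_map] at h2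
      · have h2 : {x | {u : List (Option α) | x ++ u ∈ D} ∈ p}
            ∈ Ultrafilter.map (sig a) W := by
          rw [hmap a ha]; exact hDstar
        rwa [Ultrafilter.mem_map] at h2
    have hmem : ({v | ∀ a ∈ A, substV v (some a) ∈ D ∧
        {u | substV v (some a) ++ u ∈ D} ∈ p} ∩ VS A s mm) ∈ W :=
      Filter.inter_mem hgood (hW mm)
    obtain ⟨v, hvgood, hvspan, hvnone⟩ := Ultrafilter.nonempty_of_mem hmem
    obtain ⟨j, hmj, hvIco⟩ := mSpan_bound hvspan
    refine ⟨v, j, D ∩ ⋂ a ∈ (A : Set α), {u | substV v (some a) ++ u ∈ D},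
      hmj, hvIco, hvnone, ?_, Set.inter_subset_left,
      fun a ha => (hvgood a ha).1, ?_⟩
    · exact Filter.inter_mem hD ((Filter.biInter_mem A.finite_toSet).2
        (fun a ha => (hvgood a ha).2))
    · intro a ha u hu
      exact Set.mem_iInter₂.1 hu.2 a ha
  choose vf jf Df hlt hspan hnone hmemp hsub hsubst happend using step
  let St : ℕ → Σ' x : ℕ × Set (List (Option α)), x.2 ∈ p := fun n =>
    Nat.rec ⟨(0, D0), hD0⟩
      (fun _ ih => ⟨(jf ih.1.1 ih.1.2 ih.2, Df ih.1.1 ih.1.2 ih.2), hmemp _ _ _⟩) n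
  let mseq : ℕ → ℕ := fun n => (St n).1.1
  let Dseq : ℕ → Set (List (Option α)) := fun n => (St n).1.2
  let w : ℕ → List (Option α) := fun n => vf (mseq n) (Dseq n) (St n).2
  have hm1 : ∀ n, mseq (n + 1) = jf (mseq n) (Dseq n) (St n).2 := fun n => rfl
  have hD1 : ∀ n, Dseq (n + 1) = Df (mseq n) (Dseq n) (St n).2 := fun n => rfl
  have hmono : StrictMono mseq :=
    strictMono_nat_of_lt_succ (fun n => by rw [hm1]; exact hlt _ _ _)
  have hchain : ∀ n, Dseq (n + 1) ⊆ Dseq n := fun n => by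
    rw [hD1]; exact hsub _ _ _
  have hchain' : ∀ m n : ℕ, m ≤ n → Dseq n ⊆ Dseq m := by
    have haux : ∀ (k m : ℕ), Dseq (m + k) ⊆ Dseq m := by
      intro k
      induction k with
      | zero => exact fun m => subset_rfl
      | succ k ih =>
        intro m
        have h1 : m + (k + 1) = (m + k) + 1 := rfl
        rw [h1]
        exact (hchain (m + k)).trans (ih m)
    intro m n h
    have : n = m + (n - m) := by omega
    rw [this]
    exact haux _ _
  have hkey : ∀ (k : ℕ) (l : Fin (k + 1) → ℕ) (a : Fin (k + 1) → α), StrictMono l →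
      (∀ i, a i ∈ A) →
      (List.ofFn fun i => substV (w (l i)) (some (a i))).flatten ∈ Dseq (l 0) := by
    intro k
    induction k with
    | zero =>
      intro l a hl ha
      have h1 : (List.ofFn fun i : Fin 1 => substV (w (l i)) (some (a i))).flatten
          = substV (w (l 0)) (some (a 0)) := by simp
      rw [h1]
      exact hsubst (mseq (l 0)) (Dseq (l 0)) (St (l 0)).2 (a 0) (ha 0)
    | succ k ih =>
      intro l a hl ha
      rw [List.ofFn_succ, List.flatten_cons]
      have hlsucc : StrictMono (fun i : Fin (k + 1) => l i.succ) :=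
        fun i j h => hl (Fin.succ_lt_succ_iff.mpr h)
      have htail := ih (fun i => l i.succ) (fun i => a i.succ) hlsucc (fun i => ha _)
      have h01 : l 0 < l 1 := hl (by
        rw [Fin.lt_def]
        simp)
      have hstep : (List.ofFn fun i : Fin (k + 1) =>
          substV (w (l i.succ)) (some (a i.succ))).flatten ∈ Dseq (l 0 + 1) := by
        refine hchain' (l 0 + 1) (l 1) (Nat.succ_le_of_lt h01) ?_
        exact htail
      rw [hD1 (l 0)] at hstep
      exact happend (mseq (l 0)) (Dseq (l 0)) (St (l 0)).2 (a 0) (ha 0) _ hstep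
  refine ⟨w, mseq, rfl, hmono, ?_, ?_⟩
  · intro n
    refine ⟨?_, hnone _ _ _⟩
    rw [hm1]
    exact hspan _ _ _
  · intro k l a hl ha
    exact hchain' 0 (l 0) (Nat.zero_le _) (hkey k l a hl ha)

/-! ### Part 6 : the relative Carlson–Simpson theorem for large sets -/

lemma mainCS (hs : ∀ n, HJ.IsVarWord (A : Set α) (s n)) (hA : A.Nonempty)
    {E : Set (List α)} (hlarge : HJ.IsLarge (fun _ => (A : Set α)) E s) :
    ∃ w : ℕ → List (Option α), HJ.Extracted (fun _ => (A : Set α)) s w ∧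
      HJ.constSpan (fun _ => (A : Set α)) w Set.univ ⊆ E := by
  obtain ⟨p, W, hp, hW, hmap⟩ := exists_p_W A s hs hA
  have main : ∀ D0 ∈ p, ∃ w : ℕ → List (Option α),
      HJ.Extracted (fun _ => (A : Set α)) s w ∧
      ∀ z ∈ HJ.constSpan (fun _ => (A : Set α)) w Set.univ, z.map some ∈ D0 := by
    intro D0 hD0
    obtain ⟨w, m, hm0, hmono, hwm, hkey⟩ := GG A s hp hW hmap D0 hD0
    refine ⟨w, ?_, ?_⟩
    · intro l0
      exact ⟨m, hm0, hmono, fun i _ => mem_varSpan_iff.mpr ⟨(hwm i).1, (hwm i).2⟩⟩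
    · rintro z ⟨k, l, a, hl, -, ha, rfl⟩
      rw [List.map_flatten, List.map_ofFn]
      have h1 : (List.map some ∘ fun i => substC (w (l i)) (a i))
          = fun i => substV (w (l i)) (some (a i)) := by
        funext q; exact map_some_substC _ _
      rw [h1]
      exact hkey k l a hl (fun i => ha i)
  rcases Ultrafilter.mem_or_compl_mem p ((List.map (some : α → Option α)) '' E)
    with hin | hout
  · obtain ⟨w, hext, hspec⟩ := main _ hin
    refine ⟨w, hext, fun z hz => ?_⟩
    obtain ⟨z', hz'E, heq⟩ := hspec z hz
    have hinj : Function.Injective (List.map (some : α → Option α)) :=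
      List.map_injective_iff.2 (Option.some_injective α)
    rwa [← hinj heq]
  · exfalso
    obtain ⟨w, hext, hspec⟩ := main _ hout
    obtain ⟨z, hzE, hzsp⟩ := hlarge w hext
    exact (hspec z hzsp) ⟨z, hzE, rfl⟩

end Words




/-! ### Part 7 : bridges and the final theorem -/

section Bridge

variable {α : Type*} {A : Finset α} {t : ℕ → List (Option α)}

lemma constSpan_mono {I J : Set ℕ} (h : I ⊆ J) :
    HJ.constSpan (fun _ => (A : Set α)) t I ⊆ HJ.constSpan (fun _ => (A : Set α)) t J := by
  rintro z ⟨n, l, a, h1, h2, h3, h4⟩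
  exact ⟨n, l, a, h1, fun i => h (h2 i), h3, h4⟩

lemma map_some_injective :
    Function.Injective (List.map (some : α → Option α)) :=
  List.map_injective_iff.2 (Option.some_injective α)

lemma substC_varSpan (ht : ∀ n, none ∈ t n) {I : Set ℕ} {v : List (Option α)}
    (hv : v ∈ HJ.varSpan (fun _ => (A : Set α)) t I) {a : α} (ha : a ∈ A) :
    HJ.substC v a ∈ HJ.constSpan (fun _ => (A : Set α)) t I := by
  have hv' := (mem_varSpan_iff.1 hv).1
  have h1 : HJ.substV v (some a) ∈ mSpan A t I :=
    substV_mem_mSpan hv' (some a) (fun a' ha' => by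
      rw [Option.some_inj] at ha'; rwa [← ha'])
  obtain ⟨z, hz, heq⟩ := constSpan_of_mapSome ht h1 (none_not_mem_substV_some _ _)
  have h2 : z = HJ.substC v a := by
    apply map_some_injective
    rw [← heq, map_some_substC]
  rwa [← h2]

lemma constSpan_append (ht : ∀ n, none ∈ t n) {i j k : ℕ} {z1 z2 : List α}
    (h1 : z1 ∈ HJ.constSpan (fun _ => (A : Set α)) t (Set.Ico i j))
    (h2 : z2 ∈ HJ.constSpan (fun _ => (A : Set α)) t (Set.Ico j k)) :
    z1 ++ z2 ∈ HJ.constSpan (fun _ => (A : Set α)) t (Set.Ico i k) := by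
  have hm := mSpan_append (mapSome_mem_mSpan h1) (mapSome_mem_mSpan h2)
  rw [← List.map_append] at hm
  have hnone : none ∉ (z1 ++ z2).map some := none_not_mem_map_some _
  obtain ⟨z, hz, heq⟩ := constSpan_of_mapSome ht hm hnone
  have h3 : z1 ++ z2 = z := map_some_injective heq
  rwa [h3]

lemma constSpan_bound (ht : ∀ n, none ∈ t n) {i : ℕ} {z : List α}
    (hz : z ∈ HJ.constSpan (fun _ => (A : Set α)) t (Set.Ici i)) :
    ∃ j, z ∈ HJ.constSpan (fun _ => (A : Set α)) t (Set.Ico i j) := by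
  obtain ⟨j, hij, hm⟩ := mSpan_bound (mapSome_mem_mSpan hz)
  obtain ⟨z', hz', heq⟩ := constSpan_of_mapSome ht hm (none_not_mem_map_some z)
  have h3 : z = z' := map_some_injective heq
  exact ⟨j, by rwa [h3]⟩

lemma varSpan_shift {c : ℕ} {I : Set ℕ} {v : List (Option α)}
    (hv : v ∈ HJ.varSpan (fun _ => (A : Set α)) (fun i => t (c + i)) I) :
    v ∈ HJ.varSpan (fun _ => (A : Set α)) t (Set.Ici c) := by
  obtain ⟨n, l, b, hl, hlI, hb, hnone, hw⟩ := hv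
  exact ⟨n, fun q => c + l q, b, fun i j h => Nat.add_lt_add_left (hl h) c,
    fun q => Nat.le_add_right c (l q), hb, hnone, hw⟩

end Bridge

end HJAux

open HJ in
/-- Lemma 2.11. -/
theorem stmt8 {α : Type*} (A : Finset α) (hA : A.Nonempty)
    (E : Set (List α)) (hE : E ⊆ WordsOver (A : Set α))
    (s : ℕ → List (Option α)) (hs : ∀ n, IsVarWord (A : Set α) (s n))
    (hlarge : IsLarge (fun _ => (A : Set α)) E s) :
    ∃ w : ℕ → List (Option α),
      Extracted (fun _ => (A : Set α)) s w ∧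
      ∀ n : ℕ,
        IsLarge (fun _ => (A : Set α))
          (E ∩ wordQuot (A : Set α) E
            (constSpan (fun _ => (A : Set α)) w (Set.Iic n)))
          (fun i => w (n + 1 + i)) := by
  classical
  obtain ⟨w, hext, hspan⟩ := HJAux.mainCS A s hs hA hlarge
  have ht : ∀ i, none ∈ w i := by
    intro i
    obtain ⟨m', -, -, hsp⟩ := hext i
    exact (HJAux.mem_varSpan_iff.1 (hsp i le_rfl)).2
  obtain ⟨a0, ha0⟩ := hA
  refine ⟨w, hext, ?_⟩
  intro n u hu
  obtain ⟨mb, hmb0, hmbmono, hsp⟩ := hu 0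
  have hu0 : u 0 ∈ varSpan (fun _ => (A : Set α)) w (Set.Ici (n + 1)) :=
    HJAux.varSpan_shift (hsp 0 le_rfl)
  have hz1 : substC (u 0) a0 ∈ constSpan (fun _ => (A : Set α)) w (Set.Ici (n + 1)) :=
    HJAux.substC_varSpan ht hu0 ha0
  have hzE : substC (u 0) a0 ∈ E :=
    hspan (HJAux.constSpan_mono (Set.subset_univ _) hz1)
  have hzQ : ∀ f ∈ constSpan (fun _ => (A : Set α)) w (Set.Iic n),
      f ++ substC (u 0) a0 ∈ E := by
    intro f hf
    obtain ⟨j, hzj⟩ := HJAux.constSpan_bound ht hz1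
    have hIic : Set.Iic n = Set.Ico 0 (n + 1) := by
      ext x; simp [Nat.lt_succ_iff]
    rw [hIic] at hf
    exact hspan (HJAux.constSpan_mono (Set.subset_univ _)
      (HJAux.constSpan_append ht hf hzj))
  have hzU : substC (u 0) a0 ∈ constSpan (fun _ => (A : Set α)) u Set.univ := by
    refine ⟨0, fun _ => 0, fun _ => a0, ?_, fun _ => trivial,
      fun _ => Finset.mem_coe.2 ha0, ?_⟩
    · intro x y hxy
      have hx := x.isLt
      have hy := y.isLt
      have := Fin.lt_def.mp hxy
      omega
    · simp
  exact ⟨substC (u 0) a0, ⟨hzE, hE hzE, hzQ⟩, hzU⟩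
end

section
/- Let A be a finite nonempty alphabet, E ⊆ W(A), and 𝐬 an infinite sequence of variable words over A such that E is large in 𝐬. Then there exists an infinite extracted subsequence 𝐭 = (t_n(x))_{n=0}^∞ of 𝐬 such that ⟨𝐭⟩_c ⊆ E. -/
/-! ### Auxiliary development -/

namespace HJP
open HJ List Set

variable {α : Type*}

instance : Semigroup (List (Option α)) where
  mul := (· ++ ·)
  mul_assoc := List.append_assoc

attribute [local instance] Ultrafilter.mul Ultrafilter.semigroup

lemma mul_def (u v : List (Option α)) : u * v = u ++ v := rfl

/-- substitution of a constant letter, staying among `Option`-words -/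
def sig (a : α) (w : List (Option α)) : List (Option α) := substV w (some a)

lemma substV_append (u v : List (Option α)) (b : Option α) :
    substV (u ++ v) b = substV u b ++ substV v b := by
  simp [substV]

lemma sig_mul (a : α) (u v : List (Option α)) :
    sig a (u * v) = sig a u * sig a v := substV_append u v (some a)

lemma substV_none (w : List (Option α)) : substV w none = w := by
  have : (fun c : Option α => Option.elim c none some) = id := by
    funext c; cases c <;> rfl
  simp [substV, this]

lemma substV_substV_some (w : List (Option α)) (b : Option α) (a : α) :
    substV (substV w b) (some a) = substV w (some (b.getD a)) := by
  simp only [substV, List.map_map]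
  congr 1
  funext c
  cases c with
  | none => cases b <;> rfl
  | some d => rfl

lemma map_some_substC (w : List (Option α)) (a : α) :
    (substC w a).map some = substV w (some a) := by
  simp only [substC, substV, List.map_map]
  congr 1
  funext c; cases c <;> rfl

lemma sig_substC (w : List (Option α)) (a : α) :
    sig a w = (substC w a).map some := (map_some_substC w a).symm

/-! ### Chains: an induction-friendly description of variable spans -/

inductive Chain (B : ℕ → Set α) (s : ℕ → List (Option α)) (I : Set ℕ) :
    ℕ → List (Option α) → Prop
  | single {k l : ℕ} {b : Option α} : k ≤ l → l ∈ I →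
      (∀ a : α, b = some a → a ∈ B l) → Chain B s I k (substV (s l) b)
  | cons {k l : ℕ} {b : Option α} {w : List (Option α)} : k ≤ l → l ∈ I →
      (∀ a : α, b = some a → a ∈ B l) → Chain B s I (l + 1) w →
      Chain B s I k (substV (s l) b ++ w)

variable {B : ℕ → Set α} {s : ℕ → List (Option α)}

lemma chain_of_fin : ∀ {n : ℕ} (l : Fin (n + 1) → ℕ) (b : Fin (n + 1) → Option α)
    (k : ℕ) {I : Set ℕ}, StrictMono l → (∀ i, l i ∈ I) →
    (∀ i, ∀ a : α, b i = some a → a ∈ B (l i)) → k ≤ l 0 →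
    Chain B s I k ((List.ofFn fun i => substV (s (l i)) (b i)).flatten) := by
  intro n
  induction n with
  | zero =>
    intro l b k I hl hI hb hk
    simp only [List.ofFn_succ, List.ofFn_zero, List.flatten_cons, List.flatten_nil,
      List.append_nil]
    exact Chain.single hk (hI 0) (hb 0)
  | succ n ih =>
    intro l b k I hl hI hb hk
    rw [List.ofFn_succ, List.flatten_cons]
    refine Chain.cons hk (hI 0) (hb 0) ?_
    exact ih (fun i => l i.succ) (fun i => b i.succ)
      (l 0 + 1) (fun i j h => hl (by simpa using h)) (fun i => hI _) (fun i => hb _)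
      (Nat.succ_le_of_lt (hl (Fin.succ_pos 0)))

lemma chain_to_fin {I : Set ℕ} {k : ℕ} {w : List (Option α)}
    (h : Chain B s I k w) :
    ∃ (n : ℕ) (l : Fin (n + 1) → ℕ) (b : Fin (n + 1) → Option α),
      StrictMono l ∧ (∀ i, l i ∈ I) ∧ (∀ i, k ≤ l i) ∧
      (∀ i, ∀ a : α, b i = some a → a ∈ B (l i)) ∧
      w = (List.ofFn fun i => substV (s (l i)) (b i)).flatten := by
  induction h with
  | @single k l b hk hI hb =>
    refine ⟨0, fun _ => l, fun _ => b, ?_, fun _ => hI, fun _ => hk, fun _ => hb, ?_⟩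
    · intro i j hij
      rw [Fin.lt_def] at hij
      have hi := i.is_lt; have hj := j.is_lt
      omega
    · simp
  | @cons k l b w hk hI hb _ ih =>
    obtain ⟨n, l', b', hl', hI', hk', hb', rfl⟩ := ih
    refine ⟨n + 1, Fin.cons l l', Fin.cons b b', ?_, ?_, ?_, ?_, ?_⟩
    · rw [Fin.strictMono_iff_lt_succ]
      intro i
      refine Fin.cases ?_ (fun j => ?_) i
      · simpa using lt_of_lt_of_le (Nat.lt_succ_self l) (hk' 0)
      · rw [← Fin.succ_castSucc]
        simpa [Fin.cons_succ] using hl' (Fin.castSucc_lt_succ : Fin.castSucc j < j.succ)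
    · intro i; refine Fin.cases (by simpa using hI) (fun j => by simpa using hI' j) i
    · intro i; refine Fin.cases (by simpa using hk) (fun j => by
        simpa using le_trans (le_trans hk (Nat.le_succ l)) (hk' j)) i
    · intro i; refine Fin.cases (by simpa using hb) (fun j => by simpa using hb' j) i
    · simp [List.ofFn_succ]

lemma varSpan_iff_chain {I : Set ℕ} {w : List (Option α)} :
    w ∈ varSpan B s I ↔ none ∈ w ∧ Chain B s I 0 w := by
  constructor
  · rintro ⟨n, l, b, hl, hI, hb, hnone, rfl⟩
    exact ⟨hnone, chain_of_fin l b 0 hl hI hb (Nat.zero_le _)⟩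
  · rintro ⟨hnone, hc⟩
    obtain ⟨n, l, b, hl, hI, _, hb, rfl⟩ := chain_to_fin hc
    exact ⟨n, l, b, hl, hI, hb, hnone, rfl⟩

lemma chain_congr_set {I J : Set ℕ} {k : ℕ} {w : List (Option α)}
    (h : Chain B s I k w) (hIJ : I ⊆ J) : Chain B s J k w := by
  induction h with
  | single hk hI hb => exact Chain.single hk (hIJ hI) hb
  | cons hk hI hb _ ih => exact Chain.cons hk (hIJ hI) hb ih

lemma chain_le {I : Set ℕ} {k k' : ℕ} {w : List (Option α)}
    (h : Chain B s I k w) (hk' : ∀ l ∈ I, k' ≤ l) : Chain B s I k' w := by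
  cases h with
  | single hk hI hb => exact Chain.single (hk' _ hI) hI hb
  | cons hk hI hb ht => exact Chain.cons (hk' _ hI) hI hb ht

lemma chain_append {m K k : ℕ} {u v : List (Option α)}
    (hu : Chain B s (Set.Ico m K) k u) (hv : Chain B s (Set.Ici K) K v) :
    Chain B s (Set.Ici m) k (u ++ v) := by
  induction hu with
  | @single k l b hk hI hb =>
    refine Chain.cons hk hI.1 hb ?_
    refine chain_congr_set (chain_le hv ?_) ?_
    · intro l' hl'; exact le_trans (Nat.succ_le_of_lt hI.2) hl'
    · intro n hn; exact le_trans hI.1 (le_trans (le_of_lt hI.2) hn)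
  | @cons k l b w hk hI hb _ ih =>
    rw [List.append_assoc]
    exact Chain.cons hk hI.1 hb ih

lemma varSpan_mono {I J : Set ℕ} (hIJ : I ⊆ J) :
    varSpan B s I ⊆ varSpan B s J := by
  rintro w ⟨n, l, b, hl, hI, hb, hnone, rfl⟩
  exact ⟨n, l, b, hl, fun i => hIJ (hI i), hb, hnone, rfl⟩

lemma varSpan_mul {m K : ℕ} {u v : List (Option α)}
    (hu : u ∈ varSpan B s (Set.Ico m K)) (hv : v ∈ varSpan B s (Set.Ici K)) :
    u * v ∈ varSpan B s (Set.Ici m) := by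
  rw [varSpan_iff_chain] at hu hv ⊢
  refine ⟨by rw [mul_def]; exact List.mem_append.2 (Or.inl hu.1), ?_⟩
  exact chain_append hu.2 (chain_le hv.2 (fun l hl => hl))

lemma varSpan_Ici_to_Ico {m : ℕ} {w : List (Option α)}
    (h : w ∈ varSpan B s (Set.Ici m)) :
    ∃ K, m < K ∧ w ∈ varSpan B s (Set.Ico m K) := by
  obtain ⟨n, l, b, hl, hI, hb, hnone, rfl⟩ := h
  refine ⟨l (Fin.last n) + 1, lt_of_le_of_lt (hI (Fin.last n)) (Nat.lt_succ_self _), ?_⟩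
  exact ⟨n, l, b, hl, fun i => ⟨hI i, Nat.lt_succ_of_le (hl.monotone (Fin.le_last i))⟩,
    hb, hnone, rfl⟩

/-! ### Hales–Jewett: existence of insensitive variable words -/

lemma exists_insensitive (A : Finset α) (hA : A.Nonempty) (s : ℕ → List (Option α))
    (hs : ∀ n, IsVarWord (A : Set α) (s n)) (m : ℕ)
    (Ds : Finset (Set (List (Option α)))) :
    ∃ t ∈ varSpan (fun _ => (A : Set α)) s (Set.Ici m),
      ∀ D ∈ Ds, ∀ a ∈ A, ∀ a' ∈ A, (sig a t ∈ D ↔ sig a' t ∈ D) := by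
  classical
  obtain ⟨ι, hfin, hHJ⟩ :=
    Combinatorics.Line.exists_mono_in_high_dimension (↥A) ({D // D ∈ Ds} → Prop)
  by_cases hι : Nonempty ι
  · obtain ⟨n, hn⟩ : ∃ n, Fintype.card ι = n + 1 :=
      ⟨Fintype.card ι - 1, (Nat.succ_pred_eq_of_pos Fintype.card_pos).symm⟩
    set e : ι ≃ Fin (n + 1) := Fintype.equivFinOfCardEq hn with he
    set wfun : (ι → ↥A) → List (Option α) := fun v =>
      (List.ofFn fun i : Fin (n + 1) => substV (s (m + i)) (some (v (e.symm i)).1)).flatten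
      with hwfun
    set C : (ι → ↥A) → ({D // D ∈ Ds} → Prop) := fun v D => wfun v ∈ D.1 with hC
    obtain ⟨l, c, hc⟩ := hHJ C
    set t : List (Option α) :=
      (List.ofFn fun i : Fin (n + 1) =>
        substV (s (m + i)) (Option.map Subtype.val (l.idxFun (e.symm i)))).flatten with ht
    have key : ∀ (a : α) (ha : a ∈ A), sig a t = wfun (l ⟨a, ha⟩) := by
      intro a ha
      rw [ht, hwfun]
      show List.map _ _ = _
      rw [List.map_flatten, List.map_ofFn]
      show (List.ofFn ((List.map fun c => Option.elim c (some a) some) ∘ fun i =>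
          substV (s (m + ↑i)) (Option.map Subtype.val (l.idxFun (e.symm i))))).flatten =
        (List.ofFn fun i : Fin (n+1) => substV (s (m + ↑i))
          (some (((l.idxFun (e.symm i)).getD ⟨a, ha⟩ : ↥A) : α))).flatten
      refine congrArg List.flatten (congrArg List.ofFn (funext fun i => ?_))
      show substV (substV (s (m + ↑i)) (Option.map Subtype.val (l.idxFun (e.symm i)))) (some a) = _
      rw [substV_substV_some]
      refine congrArg (substV (s (m + ↑i))) ?_
      show some ((Option.map Subtype.val (l.idxFun (e.symm i))).getD a)
          = some (((l.idxFun (e.symm i)).getD ⟨a, ha⟩ : ↥A) : α)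
      cases l.idxFun (e.symm i) <;> rfl
    refine ⟨t, ?_, ?_⟩
    · refine ⟨n, fun i => m + i, fun i => Option.map Subtype.val (l.idxFun (e.symm i)),
        ?_, ?_, ?_, ?_, rfl⟩
      · intro i j hij
        exact Nat.add_lt_add_left hij m
      · intro i; exact Nat.le_add_right m i
      · intro i a hai
        show a ∈ (A : Set α)
        change Option.map Subtype.val (l.idxFun (e.symm i)) = some a at hai
        cases hli : l.idxFun (e.symm i) with
        | none => rw [hli] at hai; simp at hai
        | some b => rw [hli] at hai; simp at hai; exact hai ▸ b.2
      · obtain ⟨i0, hi0⟩ := l.proper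
        rw [ht, List.mem_flatten]
        refine ⟨substV (s (m + (e i0 : Fin (n+1)))) (Option.map Subtype.val
          (l.idxFun (e.symm (e i0)))), ?_, ?_⟩
        · rw [List.mem_ofFn]; exact ⟨e i0, rfl⟩
        · rw [Equiv.symm_apply_apply, hi0]
          show none ∈ substV _ none
          rw [substV_none]
          exact (hs _).2
    · intro D hD a ha a' ha'
      have h1 := congrFun (hc ⟨a, ha⟩) ⟨D, hD⟩
      have h2 := congrFun (hc ⟨a', ha'⟩) ⟨D, hD⟩
      rw [key a ha, key a' ha']
      show wfun (l ⟨a, ha⟩) ∈ D ↔ wfun (l ⟨a', ha'⟩) ∈ D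
      rw [show (wfun (l ⟨a, ha⟩) ∈ D) = C (l ⟨a, ha⟩) ⟨D, hD⟩ from rfl,
        show (wfun (l ⟨a', ha'⟩) ∈ D) = C (l ⟨a', ha'⟩) ⟨D, hD⟩ from rfl, h1, h2]
  · exfalso
    obtain ⟨l, -⟩ := hHJ (fun _ _ => True)
    obtain ⟨i, -⟩ := l.proper
    exact hι ⟨i⟩

/-! ### The compact semigroup of cofinal insensitive ultrafilters -/

def VWords (A : Finset α) (s : ℕ → List (Option α)) : Set (Ultrafilter (List (Option α))) :=
  {V | (∀ m, varSpan (fun _ => (A : Set α)) s (Set.Ici m) ∈ V) ∧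
       ∀ a ∈ A, ∀ a' ∈ A, Ultrafilter.map (sig a) V = Ultrafilter.map (sig a') V}

lemma mem_ultra_mul {M : Type*} [Semigroup M] {U V : Ultrafilter M} {D : Set M} :
    D ∈ U * V ↔ ∀ᶠ u in U, ∀ᶠ v in V, u * v ∈ D := by
  have := Ultrafilter.eventually_mul U V (· ∈ D)
  simpa only [Filter.eventually_iff, Ultrafilter.mem_coe, Set.setOf_mem_eq] using this

lemma ultra_map_mul (g : List (Option α) → List (Option α))
    (hg : ∀ u v, g (u * v) = g u * g v) (U V : Ultrafilter (List (Option α))) :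
    Ultrafilter.map g (U * V) = Ultrafilter.map g U * Ultrafilter.map g V := by
  apply Ultrafilter.coe_inj.mp
  apply Filter.ext
  intro D
  rw [Ultrafilter.mem_coe, Ultrafilter.mem_coe, Ultrafilter.mem_map, mem_ultra_mul,
    mem_ultra_mul]
  rw [Ultrafilter.coe_map, Ultrafilter.coe_map, Filter.eventually_map]
  refine Filter.eventually_congr (Filter.Eventually.of_forall fun u => ?_)
  rw [Filter.eventually_map]
  refine Filter.eventually_congr (Filter.Eventually.of_forall fun v => ?_)
  simp [hg]

lemma VWords_nonempty (A : Finset α) (hA : A.Nonempty) (s : ℕ → List (Option α))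
    (hs : ∀ n, IsVarWord (A : Set α) (s n)) : (VWords A s).Nonempty := by
  classical
  set X : Set (List (Option α)) ⊕ ℕ → Set (List (Option α)) := fun i =>
    Sum.elim (fun D => {t | ∀ a ∈ A, ∀ a' ∈ A, (sig a t ∈ D ↔ sig a' t ∈ D)})
      (fun m => varSpan (fun _ => (A : Set α)) s (Set.Ici m)) i with hX
  have cond : ∀ T : Finset (Set (List (Option α))),
      (↑T : Set (Set (List (Option α)))) ⊆ Set.range X →
        (⋂₀ (↑T : Set (Set (List (Option α))))).Nonempty := by
    intro T hT
    have hsel : ∀ u : {u // u ∈ T}, ∃ i, X i = (u : Set (List (Option α))) := fun u =>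
      hT u.2
    choose g hg using hsel
    set Tidx : Finset (Set (List (Option α)) ⊕ ℕ) := T.attach.image g with hTidx
    set m₀ : ℕ := Tidx.sup (Sum.elim (fun _ => 0) id) with hm₀
    set Ds : Finset (Set (List (Option α))) :=
      Tidx.image (Sum.elim id (fun _ => (∅ : Set (List (Option α))))) with hDs
    obtain ⟨t, htv, hti⟩ := exists_insensitive A hA s hs m₀ Ds
    refine ⟨t, ?_⟩
    rintro u huT
    have hu : g ⟨u, huT⟩ ∈ Tidx := Finset.mem_image.2 ⟨⟨u, huT⟩, Finset.mem_attach _ _, rfl⟩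
    rcases hgi : g ⟨u, huT⟩ with D | mm
    · have huD : u = X (Sum.inl D) := by rw [← hgi, hg]
      rw [huD]
      intro a ha a' ha'
      refine hti D ?_ a ha a' ha'
      refine Finset.mem_image.2 ⟨Sum.inl D, ?_, rfl⟩
      rwa [hgi] at hu
    · have huD : u = X (Sum.inr mm) := by rw [← hgi, hg]
      rw [huD]
      have hmle : mm ≤ m₀ := by
        have := Finset.le_sup (f := Sum.elim (fun _ => 0) id) (by rwa [hgi] at hu)
        simpa using this
      exact varSpan_mono (fun x hx => le_trans hmle hx) htv
  obtain ⟨F, hF⟩ := Ultrafilter.exists_ultrafilter_of_finite_inter_nonempty (Set.range X) cond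
  refine ⟨F, fun m => hF ⟨Sum.inr m, rfl⟩, fun a ha a' ha' => ?_⟩
  apply Ultrafilter.coe_inj.mp
  apply Filter.ext
  intro D
  rw [Ultrafilter.mem_coe, Ultrafilter.mem_coe, Ultrafilter.mem_map, Ultrafilter.mem_map]
  have hI : {t | ∀ a ∈ A, ∀ a' ∈ A, (sig a t ∈ D ↔ sig a' t ∈ D)} ∈ F := hF ⟨Sum.inl D, rfl⟩
  constructor
  · intro h
    exact F.mem_of_superset (Filter.inter_mem hI h) fun t ht => (ht.1 a ha a' ha').1 ht.2
  · intro h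
    exact F.mem_of_superset (Filter.inter_mem hI h) fun t ht => (ht.1 a ha a' ha').2 ht.2

lemma VWords_isClosed (A : Finset α) (s : ℕ → List (Option α)) :
    IsClosed (VWords A s) := by
  have : VWords A s =
      (⋂ m, {V : Ultrafilter (List (Option α)) |
          varSpan (fun _ => (A : Set α)) s (Set.Ici m) ∈ V}) ∩
      ⋂ (a : α) (_ : a ∈ A) (a' : α) (_ : a' ∈ A) (D : Set (List (Option α))),
        ({V : Ultrafilter (List (Option α)) | sig a ⁻¹' D ∈ V} ∩ {V | sig a' ⁻¹' D ∈ V}) ∪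
        ({V : Ultrafilter (List (Option α)) | sig a ⁻¹' D ∈ V} ∩ {V | sig a' ⁻¹' D ∈ V})ᶜ ∩
        ({V : Ultrafilter (List (Option α)) | sig a ⁻¹' D ∈ V}ᶜ ∩ {V | sig a' ⁻¹' D ∈ V}ᶜ) := by
    ext V
    constructor
    · rintro ⟨h1, h2⟩
      refine ⟨Set.mem_iInter.2 h1, ?_⟩
      refine Set.mem_iInter.2 fun a => Set.mem_iInter.2 fun ha => Set.mem_iInter.2 fun a' =>
        Set.mem_iInter.2 fun ha' => Set.mem_iInter.2 fun D => ?_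
      have heq : (sig a ⁻¹' D ∈ V) ↔ (sig a' ⁻¹' D ∈ V) := by
        rw [← Ultrafilter.mem_map, ← Ultrafilter.mem_map, h2 a ha a' ha']
      by_cases hD : sig a ⁻¹' D ∈ V
      · exact Or.inl ⟨hD, heq.1 hD⟩
      · exact Or.inr ⟨fun hc => hD hc.1, fun hc => hD hc, fun hc => hD (heq.2 hc)⟩
    · rintro ⟨h1, h2⟩
      refine ⟨fun m => Set.mem_iInter.1 h1 m, fun a ha a' ha' => ?_⟩
      apply Ultrafilter.coe_inj.mp
      apply Filter.ext
      intro D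
      rw [Ultrafilter.mem_coe, Ultrafilter.mem_coe, Ultrafilter.mem_map, Ultrafilter.mem_map]
      have := Set.mem_iInter.1 (Set.mem_iInter.1 (Set.mem_iInter.1
        (Set.mem_iInter.1 (Set.mem_iInter.1 h2 a) ha) a') ha') D
      rcases this with ⟨ha1, ha2⟩ | ⟨-, hc1, hc2⟩
      · exact ⟨fun _ => ha2, fun _ => ha1⟩
      · exact ⟨fun hc => absurd hc hc1, fun hc => absurd hc hc2⟩
  rw [this]
  refine IsClosed.inter (isClosed_iInter fun m => ultrafilter_isClosed_basic _) ?_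
  refine isClosed_iInter fun a => isClosed_iInter fun _ => isClosed_iInter fun a' =>
    isClosed_iInter fun _ => isClosed_iInter fun D => ?_
  have hb1 : IsClosed {V : Ultrafilter (List (Option α)) | sig a ⁻¹' D ∈ V} :=
    ultrafilter_isClosed_basic _
  have hb2 : IsClosed {V : Ultrafilter (List (Option α)) | sig a' ⁻¹' D ∈ V} :=
    ultrafilter_isClosed_basic _
  have ho1 : IsOpen {V : Ultrafilter (List (Option α)) | sig a ⁻¹' D ∈ V} :=
    ultrafilter_isOpen_basic _
  have ho2 : IsOpen {V : Ultrafilter (List (Option α)) | sig a' ⁻¹' D ∈ V} :=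
    ultrafilter_isOpen_basic _
  exact ((hb1.inter hb2).union (((ho1.inter ho2).isClosed_compl).inter
    (ho1.isClosed_compl.inter ho2.isClosed_compl)))

lemma VWords_mul_mem (A : Finset α) (s : ℕ → List (Option α))
    {x y : Ultrafilter (List (Option α))}
    (hx : x ∈ VWords A s) (hy : y ∈ VWords A s) : x * y ∈ VWords A s := by
  constructor
  · intro m
    rw [show (varSpan (fun _ => (A : Set α)) s (Set.Ici m) ∈ x * y) ↔ _ from mem_ultra_mul]
    have h1 : ∀ᶠ u in (x : Filter _), u ∈ varSpan (fun _ => (A : Set α)) s (Set.Ici m) :=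
      Filter.eventually_iff.2 (by rw [Set.setOf_mem_eq]; exact hx.1 m)
    refine h1.mono fun u hu => ?_
    obtain ⟨K, hmK, huK⟩ := varSpan_Ici_to_Ico hu
    have h2 : ∀ᶠ v in (y : Filter _), v ∈ varSpan (fun _ => (A : Set α)) s (Set.Ici K) :=
      Filter.eventually_iff.2 (by rw [Set.setOf_mem_eq]; exact hy.1 K)
    exact h2.mono fun v hv => varSpan_mul huK hv
  · intro a ha a' ha'
    rw [ultra_map_mul _ (sig_mul a), ultra_map_mul _ (sig_mul a'),
      hx.2 a ha a' ha', hy.2 a ha a' ha']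

lemma exists_idem (A : Finset α) (hA : A.Nonempty) (s : ℕ → List (Option α))
    (hs : ∀ n, IsVarWord (A : Set α) (s n)) :
    ∃ U ∈ VWords A s, U * U = U := by
  refine exists_idempotent_in_compact_subsemigroup ?_ (VWords A s)
    (VWords_nonempty A hA s hs) ?_ ?_
  · exact Ultrafilter.continuous_mul_left
  · exact (VWords_isClosed A s).isCompact
  · exact fun x hx y hy => VWords_mul_mem A s hx hy

/-! ### Star (Galvin–Glazer) machinery -/

lemma mem_ultra_iff_eventually {M : Type*} {W : Ultrafilter M} {S : Set M} :
    S ∈ W ↔ ∀ᶠ u in (W : Filter M), u ∈ S := by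
  rw [Filter.eventually_iff, Set.setOf_mem_eq, Ultrafilter.mem_coe]

def starW (W : Ultrafilter (List (Option α))) (S : Set (List (Option α))) :
    Set (List (Option α)) :=
  S ∩ {q | {v | q * v ∈ S} ∈ W}

lemma starW_subset {W : Ultrafilter (List (Option α))} {S : Set (List (Option α))} :
    starW W S ⊆ S := Set.inter_subset_left

lemma starW_mem {W : Ultrafilter (List (Option α))} (hW : W * W = W)
    {S : Set (List (Option α))} (hS : S ∈ W) : starW W S ∈ W := by
  have h1 : S ∈ W * W := hW.symm ▸ hS
  have h2 := (mem_ultra_mul (U := W) (V := W)).1 h1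
  have h3 : {q | {v | q * v ∈ S} ∈ W} ∈ W :=
    mem_ultra_iff_eventually.2 (h2.mono fun q hq => mem_ultra_iff_eventually.2 hq)
  exact Filter.inter_mem hS h3

lemma starW_key {W : Ultrafilter (List (Option α))} (hW : W * W = W)
    {S : Set (List (Option α))} (hS : S ∈ W) {q : List (Option α)}
    (hq : q ∈ starW W S) : {v | q * v ∈ starW W S} ∈ W := by
  obtain ⟨hqS, hqB⟩ := hq
  have hBq : {v | q * v ∈ S} ∈ W := hqB
  have hstar : starW W {v | q * v ∈ S} ∈ W := starW_mem hW hBq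
  refine Filter.mem_of_superset hstar ?_
  rintro v ⟨hv1, hv2⟩
  refine ⟨hv1, ?_⟩
  have heq : {z | q * v * z ∈ S} = {z | v * z ∈ {v | q * v ∈ S}} := by
    ext z; simp [mul_assoc]
  rw [Set.mem_setOf_eq, heq]
  exact hv2

/-! ### The recursive construction -/

noncomputable def pickW (A : Finset α) (s : ℕ → List (Option α)) (m : ℕ)
    (S : Set (List (Option α))) : List (Option α) :=
  Classical.epsilon (fun u =>
    u ∈ varSpan (fun _ => (A : Set α)) s (Set.Ici m) ∧ ∀ a ∈ A, sig a u ∈ S)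

noncomputable def nxtW (A : Finset α) (s : ℕ → List (Option α))
    (W : Ultrafilter (List (Option α))) :
    ℕ × Set (List (Option α)) → ℕ × Set (List (Option α)) := fun p =>
  (Classical.epsilon (fun K => p.1 < K ∧
      pickW A s p.1 p.2 ∈ varSpan (fun _ => (A : Set α)) s (Set.Ico p.1 K)),
   starW W (starW W p.2 ∩ ⋂ a ∈ A, {v | sig a (pickW A s p.1 p.2) * v ∈ p.2}))

noncomputable def stW (A : Finset α) (s : ℕ → List (Option α))
    (W : Ultrafilter (List (Option α))) (C : Set (List (Option α))) (n : ℕ) :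
    ℕ × Set (List (Option α)) :=
  (nxtW A s W)^[n] (0, starW W C)

noncomputable def cutW (A : Finset α) (s : ℕ → List (Option α))
    (W : Ultrafilter (List (Option α))) (C : Set (List (Option α))) (n : ℕ) : ℕ :=
  (stW A s W C n).1

noncomputable def SSW (A : Finset α) (s : ℕ → List (Option α))
    (W : Ultrafilter (List (Option α))) (C : Set (List (Option α))) (n : ℕ) :
    Set (List (Option α)) :=
  (stW A s W C n).2

noncomputable def tW (A : Finset α) (s : ℕ → List (Option α))
    (W : Ultrafilter (List (Option α))) (C : Set (List (Option α))) (n : ℕ) :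
    List (Option α) :=
  pickW A s (cutW A s W C n) (SSW A s W C n)

lemma SSW_succ (A : Finset α) (s : ℕ → List (Option α))
    (W : Ultrafilter (List (Option α))) (C : Set (List (Option α))) (n : ℕ) :
    SSW A s W C (n + 1) = starW W (starW W (SSW A s W C n) ∩
      ⋂ a ∈ A, {v | sig a (tW A s W C n) * v ∈ SSW A s W C n}) := by
  rw [SSW, stW, Function.iterate_succ_apply']
  rfl

lemma cutW_succ (A : Finset α) (s : ℕ → List (Option α))
    (W : Ultrafilter (List (Option α))) (C : Set (List (Option α))) (n : ℕ) :
    cutW A s W C (n + 1) = Classical.epsilon (fun K => cutW A s W C n < K ∧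
      tW A s W C n ∈ varSpan (fun _ => (A : Set α)) s
        (Set.Ico (cutW A s W C n) K)) := by
  rw [cutW, stW, Function.iterate_succ_apply']
  rfl

lemma cutW_zero (A : Finset α) (s : ℕ → List (Option α))
    (W : Ultrafilter (List (Option α))) (C : Set (List (Option α))) :
    cutW A s W C 0 = 0 := rfl

lemma SSW_zero (A : Finset α) (s : ℕ → List (Option α))
    (W : Ultrafilter (List (Option α))) (C : Set (List (Option α))) :
    SSW A s W C 0 = starW W C := rfl

section Construction

variable (A : Finset α) (s : ℕ → List (Option α))
  (U W : Ultrafilter (List (Option α))) (C : Set (List (Option α)))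

variable {A s U W C}

lemma construction (hA : A.Nonempty)
    (hU1 : ∀ m, varSpan (fun _ => (A : Set α)) s (Set.Ici m) ∈ U)
    (hU2 : ∀ a ∈ A, Ultrafilter.map (sig a) U = W)
    (hW : W * W = W) (hC : C ∈ W) :
    Extracted (fun _ => (A : Set α)) s (tW A s W C) ∧
      ∀ (n : ℕ) (l : Fin (n + 1) → ℕ) (a : Fin (n + 1) → α), StrictMono l →
        (∀ i, a i ∈ A) →
        ((List.ofFn fun i => substC (tW A s W C (l i)) (a i)).flatten).map some ∈ C := by
  classical
  -- `SSW` is always of the form `starW W X` for `X ∈ W`, and the picks succeed.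
  have hSgood : ∀ n, ∃ X, X ∈ W ∧ SSW A s W C n = starW W X := by
    intro n
    induction n with
    | zero => exact ⟨C, hC, SSW_zero A s W C⟩
    | succ n ih =>
      obtain ⟨X, hX, hSX⟩ := ih
      have hSn : SSW A s W C n ∈ W := hSX ▸ starW_mem hW hX
      have hex : ∃ u, u ∈ varSpan (fun _ => (A : Set α)) s (Set.Ici (cutW A s W C n)) ∧
          ∀ a ∈ A, sig a u ∈ SSW A s W C n := by
        have hmem : (varSpan (fun _ => (A : Set α)) s (Set.Ici (cutW A s W C n)) ∩
            ⋂ a ∈ A, sig a ⁻¹' (SSW A s W C n)) ∈ U := by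
          refine Filter.inter_mem (hU1 _) ?_
          refine (Filter.biInter_finset_mem A).2 fun a ha => ?_
          have : SSW A s W C n ∈ Ultrafilter.map (sig a) U := (hU2 a ha).symm ▸ hSn
          exact Ultrafilter.mem_map.1 this
        obtain ⟨u, hu⟩ := Ultrafilter.nonempty_of_mem hmem
        refine ⟨u, hu.1, fun a ha => ?_⟩
        have := hu.2
        simp only [Set.mem_iInter] at this
        exact this a ha
      have hpick := Classical.epsilon_spec hex
      have hT : (starW W (SSW A s W C n) ∩
          ⋂ a ∈ A, {v | sig a (tW A s W C n) * v ∈ SSW A s W C n}) ∈ W := by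
        refine Filter.inter_mem (starW_mem hW hSn) ?_
        refine (Filter.biInter_finset_mem A).2 fun a ha => ?_
        have hq : sig a (tW A s W C n) ∈ starW W X := by
          rw [← hSX]; exact hpick.2 a ha
        have := starW_key hW hX hq
        rw [← hSX] at this
        exact this
      exact ⟨_, hT, SSW_succ A s W C n⟩
  have hSmem : ∀ n, SSW A s W C n ∈ W := by
    intro n; obtain ⟨X, hX, hSX⟩ := hSgood n; exact hSX ▸ starW_mem hW hX
  have hex : ∀ n, ∃ u, u ∈ varSpan (fun _ => (A : Set α)) s (Set.Ici (cutW A s W C n)) ∧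
      ∀ a ∈ A, sig a u ∈ SSW A s W C n := by
    intro n
    have hmem : (varSpan (fun _ => (A : Set α)) s (Set.Ici (cutW A s W C n)) ∩
        ⋂ a ∈ A, sig a ⁻¹' (SSW A s W C n)) ∈ U := by
      refine Filter.inter_mem (hU1 _) ?_
      refine (Filter.biInter_finset_mem A).2 fun a ha => ?_
      have : SSW A s W C n ∈ Ultrafilter.map (sig a) U := (hU2 a ha).symm ▸ hSmem n
      exact Ultrafilter.mem_map.1 this
    obtain ⟨u, hu⟩ := Ultrafilter.nonempty_of_mem hmem
    refine ⟨u, hu.1, fun a ha => ?_⟩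
    have := hu.2
    simp only [Set.mem_iInter] at this
    exact this a ha
  have hpick : ∀ n, tW A s W C n ∈ varSpan (fun _ => (A : Set α)) s
      (Set.Ici (cutW A s W C n)) ∧ ∀ a ∈ A, sig a (tW A s W C n) ∈ SSW A s W C n :=
    fun n => Classical.epsilon_spec (hex n)
  have hcut : ∀ n, cutW A s W C n < cutW A s W C (n + 1) ∧
      tW A s W C n ∈ varSpan (fun _ => (A : Set α)) s
        (Set.Ico (cutW A s W C n) (cutW A s W C (n + 1))) := by
    intro n
    have hexK : ∃ K, cutW A s W C n < K ∧ tW A s W C n ∈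
        varSpan (fun _ => (A : Set α)) s (Set.Ico (cutW A s W C n) K) := by
      obtain ⟨K, h1, h2⟩ := varSpan_Ici_to_Ico (hpick n).1
      exact ⟨K, h1, h2⟩
    rw [cutW_succ]
    exact Classical.epsilon_spec hexK
  have hdec : ∀ n, SSW A s W C (n + 1) ⊆ SSW A s W C n := by
    intro n
    rw [SSW_succ]
    exact fun v hv => starW_subset ((starW_subset hv).1)
  have hstep : ∀ n, ∀ a ∈ A, ∀ v ∈ SSW A s W C (n + 1),
      sig a (tW A s W C n) * v ∈ SSW A s W C n := by
    intro n a ha v hv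
    rw [SSW_succ] at hv
    have := (starW_subset hv).2
    simp only [Set.mem_iInter] at this
    exact this a ha
  have hchain : ∀ k n, k ≤ n → SSW A s W C n ⊆ SSW A s W C k := by
    intro k n
    induction n with
    | zero => intro hkn; rw [Nat.le_zero.1 hkn]
    | succ n ih =>
      intro hkn
      rcases Nat.lt_or_ge k (n + 1) with h | h
      · exact fun v hv => ih (Nat.lt_succ_iff.1 h) (hdec n hv)
      · rw [Nat.le_antisymm hkn h]
  have hCsub : ∀ n, SSW A s W C n ⊆ C := by
    intro n
    refine (hchain 0 n (Nat.zero_le n)).trans ?_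
    rw [SSW_zero]
    exact starW_subset
  -- the product lemma
  have hprod : ∀ (n : ℕ) (l : Fin (n + 1) → ℕ) (a : Fin (n + 1) → α), StrictMono l →
      (∀ i, a i ∈ A) →
      ((List.ofFn fun i => substC (tW A s W C (l i)) (a i)).flatten).map some ∈
        SSW A s W C (l 0) := by
    intro n
    induction n with
    | zero =>
      intro l a hl ha
      have : ((List.ofFn fun i : Fin 1 => substC (tW A s W C (l i)) (a i)).flatten).map some
          = sig (a 0) (tW A s W C (l 0)) := by
        simp only [List.ofFn_succ, List.ofFn_zero, List.flatten_cons, List.flatten_nil,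
          List.append_nil]
        exact (map_some_substC _ _)
      rw [this]
      exact (hpick (l 0)).2 (a 0) (ha 0)
    | succ n ih =>
      intro l a hl ha
      have hsplit : ((List.ofFn fun i : Fin (n + 2) =>
            substC (tW A s W C (l i)) (a i)).flatten).map some
          = sig (a 0) (tW A s W C (l 0)) *
            ((List.ofFn fun i : Fin (n + 1) =>
              substC (tW A s W C (l i.succ)) (a i.succ)).flatten).map some := by
        rw [List.ofFn_succ, List.flatten_cons, List.map_append, mul_def,
          map_some_substC]
        rfl
      rw [hsplit]
      have hq : ((List.ofFn fun i : Fin (n + 1) =>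
          substC (tW A s W C (l i.succ)) (a i.succ)).flatten).map some ∈
          SSW A s W C (l 1) :=
        ih (fun i => l i.succ) (fun i => a i.succ)
          (fun i j hij => hl (by simpa using hij)) (fun i => ha _)
      have hq' : ((List.ofFn fun i : Fin (n + 1) =>
          substC (tW A s W C (l i.succ)) (a i.succ)).flatten).map some ∈
          SSW A s W C (l 0 + 1) :=
        hchain (l 0 + 1) (l 1) (Nat.succ_le_of_lt (hl (by simp [Fin.lt_def]))) hq
      exact hstep (l 0) (a 0) (ha 0) _ hq'
  refine ⟨?_, fun n l a hl ha => hCsub (l 0) (hprod n l a hl ha)⟩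
  -- Extracted
  intro lvl
  refine ⟨cutW A s W C, cutW_zero A s W C, ?_, ?_⟩
  · exact strictMono_nat_of_lt_succ fun n => (hcut n).1
  · intro i _
    exact (hcut i).2

end Construction
end HJP

attribute [local instance] Ultrafilter.mul Ultrafilter.semigroup

open HJ in
/-- Corollary 2.12: a large set contains the constant span of some extracted
subsequence. -/
theorem stmt9 {α : Type*} (A : Finset α) (hA : A.Nonempty)
    (E : Set (List α)) (hE : E ⊆ WordsOver (A : Set α))
    (s : ℕ → List (Option α)) (hs : ∀ n, IsVarWord (A : Set α) (s n))
    (hlarge : IsLarge (fun _ => (A : Set α)) E s) :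
    ∃ t : ℕ → List (Option α),
      Extracted (fun _ => (A : Set α)) s t ∧
      constSpan (fun _ => (A : Set α)) t Set.univ ⊆ E := by
  classical
  obtain ⟨U, hUW, hUU⟩ := HJP.exists_idem A hA s hs
  obtain ⟨a₀, ha₀⟩ := hA
  set W := Ultrafilter.map (HJP.sig a₀) U with hWdef
  have hU2 : ∀ a ∈ A, Ultrafilter.map (HJP.sig a) U = W := fun a ha =>
    hUW.2 a ha a₀ ha₀
  have hW : W * W = W := by
    rw [hWdef, ← HJP.ultra_map_mul _ (HJP.sig_mul a₀) U U, hUU]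
  set Esharp : Set (List (Option α)) := (fun w : List α => w.map some) '' E with hEs
  have hinj : Function.Injective (List.map (some : α → Option α)) :=
    List.map_injective_iff.2 (fun x y h => Option.some.inj h)
  by_cases hin : Esharp ∈ W
  · obtain ⟨hext, hprod⟩ := HJP.construction ⟨a₀, ha₀⟩ hUW.1 hU2 hW hin
    refine ⟨HJP.tW A s W Esharp, hext, ?_⟩
    rintro w ⟨n, l, a, hl, -, ha, rfl⟩
    obtain ⟨w', hw'E, hw'⟩ := hprod n l a hl (fun i => ha i)
    rwa [← hinj hw']
  · have hin' : Esharpᶜ ∈ W := (Ultrafilter.compl_mem_iff_notMem).2 hin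
    exfalso
    obtain ⟨w, hwE, hwc⟩ := hlarge _ (HJP.construction ⟨a₀, ha₀⟩ hUW.1 hU2 hW hin').1
    obtain ⟨n, l, a, hl, -, ha, rfl⟩ := hwc
    have h1 := (HJP.construction ⟨a₀, ha₀⟩ hUW.1 hU2 hW hin').2 n l a hl (fun i => ha i)
    exact h1 ⟨_, hwE, rfl⟩
end

section
/- Let (A_n)_{n=0}^∞ be an increasing sequence of finite nonempty alphabets with union A, let k ∈ ℕ, let E ⊆ W(A), and let 𝐬 be an infinite sequence of variable words over A such that E is k-large in 𝐬. If r ≥ 2 and E = E_1 ∪ ⋯ ∪ E_r, then there exist 1 ≤ i ≤ r and an infinite extracted k-subsequence 𝐭 of 𝐬 such that E_i is k-large in 𝐭. -/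
namespace HJ

variable {α : Type*} {B : ℕ → Set α}

lemma substV_none (s : List (Option α)) : substV s none = s := by
  have : (fun c : Option α => Option.elim c none some) = id := by
    funext c; cases c <;> rfl
  simp [substV, this]

lemma substV_substV (s : List (Option α)) (b d : Option α) :
    substV (substV s b) d = substV s (Option.elim b d some) := by
  unfold substV; rw [List.map_map]; congr 1; funext c; cases c <;> cases b <;> rfl

lemma substC_substV (s : List (Option α)) (b : Option α) (a : α) :
    substC (substV s b) a = substC s (b.getD a) := by
  unfold substC substV; rw [List.map_map]; congr 1; funext c; cases c <;> cases b <;> rfl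

lemma substV_flatten (L : List (List (Option α))) (b : Option α) :
    substV L.flatten b = (L.map (substV · b)).flatten := by
  unfold substV; rw [List.map_flatten]

lemma substC_flatten (L : List (List (Option α))) (a : α) :
    substC L.flatten a = (L.map (substC · a)).flatten := by
  unfold substC; rw [List.map_flatten]

/-! ### list characterizations -/

lemma constSpan_of_list {s : ℕ → List (Option α)} {I : Set ℕ} {L : List (ℕ × α)}
    (hne : L ≠ []) (hp : L.Pairwise (fun p q => p.1 < q.1))
    (hm : ∀ p ∈ L, p.1 ∈ I ∧ p.2 ∈ B p.1) :
    (L.map fun p => substC (s p.1) p.2).flatten ∈ constSpan B s I := by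
  obtain ⟨p₀, L', rfl⟩ : ∃ p₀ L', L = p₀ :: L' := by
    cases L with
    | nil => exact absurd rfl hne
    | cons a l => exact ⟨a, l, rfl⟩
  refine ⟨L'.length, fun i => ((p₀ :: L').get i).1, fun i => ((p₀ :: L').get i).2,
    ?_, ?_, ?_, ?_⟩
  · intro i j hij
    exact List.pairwise_iff_get.mp hp i j hij
  · intro i; exact (hm _ (List.get_mem _ _)).1
  · intro i; exact (hm _ (List.get_mem _ _)).2
  · rw [← List.ofFn_getElem_eq_map (p₀ :: L') (fun p => substC (s p.1) p.2)]; rfl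

lemma constSpan_to_list {s : ℕ → List (Option α)} {I : Set ℕ} {w : List α}
    (hw : w ∈ constSpan B s I) :
    ∃ L : List (ℕ × α), L ≠ [] ∧ L.Pairwise (fun p q => p.1 < q.1) ∧
      (∀ p ∈ L, p.1 ∈ I ∧ p.2 ∈ B p.1) ∧
      w = (L.map fun p => substC (s p.1) p.2).flatten := by
  obtain ⟨n, l, a, hl, hI, hB', rfl⟩ := hw
  refine ⟨List.ofFn (fun i => (l i, a i)), ?_, ?_, ?_, ?_⟩
  · intro h; have := congrArg List.length h; simp at this
  · exact List.pairwise_ofFn.mpr fun i j hij => hl hij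
  · intro p hp
    obtain ⟨i, rfl⟩ := List.mem_ofFn.mp hp
    exact ⟨hI i, hB' i⟩
  · rw [List.map_ofFn]; rfl

lemma varSpan_of_list {s : ℕ → List (Option α)} {I : Set ℕ} {L : List (ℕ × Option α)}
    (hne : L ≠ []) (hp : L.Pairwise (fun p q => p.1 < q.1))
    (hm : ∀ p ∈ L, p.1 ∈ I) (hb : ∀ p ∈ L, ∀ a : α, p.2 = some a → a ∈ B p.1)
    {w : List (Option α)} (hnone : none ∈ w)
    (hweq : w = (L.map fun p => substV (s p.1) p.2).flatten) :
    w ∈ varSpan B s I := by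
  obtain ⟨p₀, L', rfl⟩ : ∃ p₀ L', L = p₀ :: L' := by
    cases L with
    | nil => exact absurd rfl hne
    | cons a l => exact ⟨a, l, rfl⟩
  refine ⟨L'.length, fun i => ((p₀ :: L').get i).1, fun i => ((p₀ :: L').get i).2,
    ?_, ?_, ?_, hnone, ?_⟩
  · intro i j hij
    exact List.pairwise_iff_get.mp hp i j hij
  · intro i; exact hm _ (List.get_mem _ _)
  · intro i; exact hb _ (List.get_mem _ _)
  · rw [hweq, ← List.ofFn_getElem_eq_map (p₀ :: L') (fun p => substV (s p.1) p.2)]; rfl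

lemma varSpan_to_list {s : ℕ → List (Option α)} {I : Set ℕ} {w : List (Option α)}
    (hw : w ∈ varSpan B s I) :
    ∃ L : List (ℕ × Option α), L ≠ [] ∧ L.Pairwise (fun p q => p.1 < q.1) ∧
      (∀ p ∈ L, p.1 ∈ I) ∧ (∀ p ∈ L, ∀ a : α, p.2 = some a → a ∈ B p.1) ∧
      none ∈ w ∧ w = (L.map fun p => substV (s p.1) p.2).flatten := by
  obtain ⟨n, l, b, hl, hI, hB', hnone, rfl⟩ := hw
  refine ⟨List.ofFn (fun i => (l i, b i)), ?_, ?_, ?_, ?_, hnone, ?_⟩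
  · intro h; have := congrArg List.length h; simp at this
  · exact List.pairwise_ofFn.mpr fun i j hij => hl hij
  · intro p hp
    obtain ⟨i, rfl⟩ := List.mem_ofFn.mp hp
    exact hI i
  · intro p hp
    obtain ⟨i, rfl⟩ := List.mem_ofFn.mp hp
    exact hB' i
  · rw [List.map_ofFn]; rfl

end HJ

namespace HJ

variable {α : Type*} {B : ℕ → Set α}

lemma constSpan_mono {s : ℕ → List (Option α)} {I J : Set ℕ} (h : I ⊆ J) :
    constSpan B s I ⊆ constSpan B s J := by
  rintro w ⟨n, l, a, h1, h2, h3, h4⟩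
  exact ⟨n, l, a, h1, fun i => h (h2 i), h3, h4⟩

lemma varSpan_congr {s s' : ℕ → List (Option α)} {I : Set ℕ}
    (h : ∀ i ∈ I, s i = s' i) : varSpan B s I ⊆ varSpan B s' I := by
  rintro w ⟨n, l, b, h1, h2, h3, h4, h5⟩
  refine ⟨n, l, b, h1, h2, h3, h4, ?_⟩
  rw [h5]
  have he : (fun i => substV (s (l i)) (b i)) = fun i => substV (s' (l i)) (b i) :=
    funext fun i => by rw [h _ (h2 i)]
  rw [he]

lemma constSpan_congr {s s' : ℕ → List (Option α)} {I : Set ℕ}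
    (h : ∀ i ∈ I, s i = s' i) : constSpan B s I ⊆ constSpan B s' I := by
  rintro w ⟨n, l, a, h1, h2, h3, h4⟩
  refine ⟨n, l, a, h1, h2, h3, ?_⟩
  rw [h4]
  have he : (fun i => substC (s (l i)) (a i)) = fun i => substC (s' (l i)) (a i) :=
    funext fun i => by rw [h _ (h2 i)]
  rw [he]

lemma self_mem_varSpan {s : ℕ → List (Option α)} {I : Set ℕ} {j : ℕ}
    (hj : j ∈ I) (hnone : none ∈ s j) : s j ∈ varSpan B s I := by
  refine ⟨0, fun _ => j, fun _ => none, ?_, fun _ => hj, ?_, hnone, ?_⟩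
  · intro i j hij
    have hi := i.isLt
    have hj' := j.isLt
    rw [Fin.lt_def] at hij
    omega
  · intro i a h
    simp at h
  · simp [substV_none]

lemma constSpan_univ_bound {s : ℕ → List (Option α)} {w : List α}
    (hw : w ∈ constSpan B s Set.univ) :
    ∃ q : ℕ, w ∈ constSpan B s (Set.Ico 0 q) := by
  obtain ⟨n, l, a, h1, _, h3, h4⟩ := hw
  refine ⟨l (Fin.last n) + 1, n, l, a, h1, ?_, h3, h4⟩
  intro i
  exact ⟨Nat.zero_le _, Nat.lt_succ_of_le (h1.monotone (Fin.le_last i))⟩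

/-- Composition for variable spans. -/
lemma varSpan_comp {s t : ℕ → List (Option α)} {m : ℕ → ℕ}
    (hB : Monotone B) (hm : StrictMono m)
    (ht : ∀ i, t i ∈ varSpan B s (Set.Ico (m i) (m (i + 1))))
    (p q : ℕ) :
    varSpan B t (Set.Ico p q) ⊆ varSpan B s (Set.Ico (m p) (m q)) := by
  intro w hw
  obtain ⟨LT, hTne, hTp, hTI, hTb, hTnone, hTeq⟩ := varSpan_to_list hw
  choose C hCne hCp hCI hCb _ hCeq using fun i => varSpan_to_list (ht i)
  set F : ℕ × Option α → List (ℕ × Option α) :=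
    fun p => (C p.1).map fun r => (r.1, Option.elim r.2 p.2 some) with hF
  have hFfst : ∀ (p : ℕ × Option α), ∀ x ∈ F p, m p.1 ≤ x.1 ∧ x.1 < m (p.1 + 1) := by
    intro p x hx
    obtain ⟨r, hr, rfl⟩ := List.mem_map.mp hx
    exact ⟨(hCI p.1 r hr).1, (hCI p.1 r hr).2⟩
  refine varSpan_of_list (L := (LT.map F).flatten) ?_ ?_ ?_ ?_ hTnone ?_
  · -- nonempty
    intro h
    rw [List.flatten_eq_nil_iff] at h
    obtain ⟨p₀, hp₀⟩ := List.exists_mem_of_ne_nil LT hTne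
    have := h (F p₀) (List.mem_map.mpr ⟨p₀, hp₀, rfl⟩)
    rw [hF] at this
    simp only [List.map_eq_nil_iff] at this
    exact hCne p₀.1 this
  · -- pairwise
    rw [List.pairwise_flatten]
    constructor
    · intro l' hl'
      obtain ⟨p, _, rfl⟩ := List.mem_map.mp hl'
      rw [hF, List.pairwise_map]
      exact (hCp p.1).imp (fun h => h)
    · rw [List.pairwise_map]
      refine hTp.imp ?_
      intro p1 p2 h12 x hx y hy
      calc x.1 < m (p1.1 + 1) := (hFfst p1 x hx).2
        _ ≤ m p2.1 := hm.monotone h12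
        _ ≤ y.1 := (hFfst p2 y hy).1
  · -- indices in interval
    intro x hx
    obtain ⟨l', hl', hxl⟩ := List.mem_flatten.mp hx
    obtain ⟨p, hp, rfl⟩ := List.mem_map.mp hl'
    obtain ⟨hp1, hp2⟩ := hTI p hp
    constructor
    · exact le_trans (hm.monotone hp1) (hFfst p x hxl).1
    · exact lt_of_lt_of_le (hFfst p x hxl).2 (hm.monotone hp2)
  · -- letter condition
    intro x hx a hxa
    obtain ⟨l', hl', hxl⟩ := List.mem_flatten.mp hx
    obtain ⟨p, hp, rfl⟩ := List.mem_map.mp hl'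
    obtain ⟨r, hr, rfl⟩ := List.mem_map.mp hxl
    cases hrr : r.2 with
    | some a' =>
      have ha : a' = a := by simpa [hrr] using hxa
      subst ha
      exact hCb p.1 r hr a' hrr
    | none =>
      have hpa : p.2 = some a := by simpa [hrr] using hxa
      have h1 : a ∈ B p.1 := hTb p hp a hpa
      have h2 : p.1 ≤ r.1 := le_trans hm.le_apply (hCI p.1 r hr).1
      exact hB h2 h1
  · -- the word equation
    rw [hTeq]
    have key : ∀ p : ℕ × Option α,
        substV (t p.1) p.2 = ((F p).map fun x => substV (s x.1) x.2).flatten := by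
      intro p
      rw [hCeq p.1, substV_flatten, hF]
      simp only [List.map_map]
      refine congrArg List.flatten (List.map_congr_left fun r _ => ?_)
      simp only [Function.comp_apply]
      exact substV_substV _ _ _
    rw [List.map_congr_left (fun p _ => key p)]
    rw [List.map_flatten, List.flatten_flatten]
    simp only [List.map_map]
    rfl

/-- Composition for constant spans. -/
lemma constSpan_comp {s t : ℕ → List (Option α)} {m : ℕ → ℕ}
    (hB : Monotone B) (hm : StrictMono m)
    (ht : ∀ i, t i ∈ varSpan B s (Set.Ico (m i) (m (i + 1))))
    (p q : ℕ) :
    constSpan B t (Set.Ico p q) ⊆ constSpan B s (Set.Ico (m p) (m q)) := by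
  intro w hw
  obtain ⟨LT, hTne, hTp, hTm, hTeq⟩ := constSpan_to_list hw
  choose C hCne hCp hCI hCb _ hCeq using fun i => varSpan_to_list (ht i)
  set F : ℕ × α → List (ℕ × α) :=
    fun p => (C p.1).map fun r => (r.1, Option.getD r.2 p.2) with hF
  have hFfst : ∀ (p : ℕ × α), ∀ x ∈ F p, m p.1 ≤ x.1 ∧ x.1 < m (p.1 + 1) := by
    intro p x hx
    obtain ⟨r, hr, rfl⟩ := List.mem_map.mp hx
    exact ⟨(hCI p.1 r hr).1, (hCI p.1 r hr).2⟩
  rw [hTeq]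
  have key : ∀ p : ℕ × α,
      substC (t p.1) p.2 = ((F p).map fun x => substC (s x.1) x.2).flatten := by
    intro p
    rw [hCeq p.1, substC_flatten, hF]
    simp only [List.map_map]
    refine congrArg List.flatten (List.map_congr_left fun r _ => ?_)
    simp only [Function.comp_apply]
    exact substC_substV _ _ _
  rw [List.map_congr_left (fun p _ => key p)]
  have : ((LT.map fun p => ((F p).map fun x => substC (s x.1) x.2).flatten)).flatten
      = (((LT.map F).flatten).map fun x => substC (s x.1) x.2).flatten := by
    rw [List.map_flatten, List.flatten_flatten]
    simp only [List.map_map]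
    rfl
  rw [this]
  refine constSpan_of_list ?_ ?_ ?_
  · -- nonempty
    intro h
    rw [List.flatten_eq_nil_iff] at h
    obtain ⟨p₀, hp₀⟩ := List.exists_mem_of_ne_nil LT hTne
    have := h (F p₀) (List.mem_map.mpr ⟨p₀, hp₀, rfl⟩)
    rw [hF] at this
    simp only [List.map_eq_nil_iff] at this
    exact hCne p₀.1 this
  · -- pairwise
    rw [List.pairwise_flatten]
    constructor
    · intro l' hl'
      obtain ⟨p, _, rfl⟩ := List.mem_map.mp hl'
      rw [hF, List.pairwise_map]
      exact (hCp p.1).imp (fun h => h)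
    · rw [List.pairwise_map]
      refine hTp.imp ?_
      intro p1 p2 h12 x hx y hy
      calc x.1 < m (p1.1 + 1) := (hFfst p1 x hx).2
        _ ≤ m p2.1 := hm.monotone h12
        _ ≤ y.1 := (hFfst p2 y hy).1
  · -- indices and letters
    intro x hx
    obtain ⟨l', hl', hxl⟩ := List.mem_flatten.mp hx
    obtain ⟨p, hp, rfl⟩ := List.mem_map.mp hl'
    obtain ⟨hp1, hp2⟩ := hTm p hp
    constructor
    · constructor
      · exact le_trans (hm.monotone hp1.1) (hFfst p x hxl).1
      · exact lt_of_lt_of_le (hFfst p x hxl).2 (hm.monotone hp1.2)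
    · obtain ⟨r, hr, rfl⟩ := List.mem_map.mp hxl
      cases hrr : r.2 with
      | some a' =>
        simp only [hrr, Option.getD_some]
        exact hCb p.1 r hr a' hrr
      | none =>
        simp only [hrr, Option.getD_none]
        have h2 : p.1 ≤ r.1 := le_trans hm.le_apply (hCI p.1 r hr).1
        exact hB h2 hp2

end HJ

namespace HJ

variable {α : Type*} {B : ℕ → Set α}

lemma none_mem_of_extracted {s t : ℕ → List (Option α)}
    (h : Extracted B s t) (n : ℕ) : none ∈ t n := by
  obtain ⟨m, _, _, hb⟩ := h n
  obtain ⟨_, _, _, _, _, _, hnone, _⟩ := hb n le_rfl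
  exact hnone

lemma extracted_refl {t : ℕ → List (Option α)} (h : ∀ n, none ∈ t n) :
    Extracted B t t := by
  intro l
  refine ⟨id, rfl, strictMono_id, fun i _ => ?_⟩
  exact self_mem_varSpan ⟨le_refl i, Nat.lt_succ_self i⟩ (h i)

lemma pad_extractedFin {s t : ℕ → List (Option α)} {m : ℕ → ℕ} {L : ℕ}
    (hm : StrictMono m) (hs : ∀ n, none ∈ s n)
    (ht : ∀ i ≤ L, t i ∈ varSpan B s (Set.Ico (m i) (m (i + 1)))) :
    ∃ t' : ℕ → List (Option α), (∀ i ≤ L, t' i = t i) ∧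
      ∀ i, t' i ∈ varSpan B s (Set.Ico (m i) (m (i + 1))) := by
  refine ⟨fun i => if i ≤ L then t i else s (m i), fun i hi => if_pos hi, ?_⟩
  intro i
  by_cases hi : i ≤ L
  · simp only [if_pos hi]; exact ht i hi
  · simp only [if_neg hi]
    exact self_mem_varSpan ⟨le_refl _, hm (Nat.lt_succ_self i)⟩ (hs (m i))

lemma extracted_trans {s t u : ℕ → List (Option α)} (hB : Monotone B)
    (hs : ∀ n, none ∈ s n) (hst : Extracted B s t) (htu : Extracted B t u) :
    Extracted B s u := by
  intro l
  obtain ⟨mu, hmu0, hmu, hu⟩ := htu l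
  obtain ⟨mt, hmt0, hmt, ht⟩ := hst (mu (l + 1))
  obtain ⟨t', ht'eq, ht'⟩ := pad_extractedFin hmt hs ht
  refine ⟨mt ∘ mu, by simp [hmu0, hmt0], hmt.comp hmu, ?_⟩
  intro i hi
  have h1 : u i ∈ varSpan B t' (Set.Ico (mu i) (mu (i + 1))) := by
    refine varSpan_congr ?_ (hu i hi)
    intro j hj
    refine (ht'eq j ?_).symm
    have : mu (i + 1) ≤ mu (l + 1) := hmu.monotone (by omega)
    have := hj.2
    omega
  exact varSpan_comp hB hmt ht' (mu i) (mu (i + 1)) h1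

lemma constSpan_subset_of_extracted {t u : ℕ → List (Option α)} (hB : Monotone B)
    (ht : ∀ n, none ∈ t n) (htu : Extracted B t u) :
    constSpan B u Set.univ ⊆ constSpan B t Set.univ := by
  intro w hw
  obtain ⟨q, hw⟩ := constSpan_univ_bound hw
  obtain ⟨m, hm0, hm, hblocks⟩ := htu q
  obtain ⟨u', hu'eq, hu'⟩ := pad_extractedFin hm ht hblocks
  have h1 : w ∈ constSpan B u' (Set.Ico 0 q) := by
    refine constSpan_congr ?_ hw
    intro j hj
    exact (hu'eq j (le_of_lt hj.2)).symm
  have h2 := constSpan_comp hB hm hu' 0 q h1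
  exact constSpan_mono (fun x _ => Set.mem_univ x) h2

lemma isLarge_mono {E F : Set (List α)} {s : ℕ → List (Option α)}
    (h : E ⊆ F) (hE : IsLarge B E s) : IsLarge B F s := by
  intro w hw
  obtain ⟨z, hz1, hz2⟩ := hE w hw
  exact ⟨z, h hz1, hz2⟩

lemma pair_lemma {E₀ E₁ : Set (List α)} {s : ℕ → List (Option α)}
    (hB : Monotone B) (hs : ∀ n, none ∈ s n) (h : IsLarge B (E₀ ∪ E₁) s) :
    ∃ t, Extracted B s t ∧ (IsLarge B E₀ t ∨ IsLarge B E₁ t) := by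
  by_cases h0 : IsLarge B E₀ s
  · exact ⟨s, extracted_refl hs, Or.inl h0⟩
  · rw [IsLarge] at h0
    push_neg at h0
    obtain ⟨w, hw, hempty⟩ := h0
    refine ⟨w, hw, Or.inr ?_⟩
    intro u hu
    obtain ⟨z, hz, hzc⟩ := h u (extracted_trans hB hs hw hu)
    have hzw : z ∈ constSpan B w Set.univ :=
      constSpan_subset_of_extracted hB (none_mem_of_extracted hw) hu hzc
    cases hz with
    | inl hz0 =>
      have h5 : z ∈ E₀ ∩ constSpan B w Set.univ := Set.mem_inter hz0 hzw
      rw [hempty] at h5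
      exact h5.elim
    | inr hz1 => exact ⟨z, hz1, hzc⟩

lemma main_lemma (hB : Monotone B) :
    ∀ (r : ℕ) (E' : Fin (r + 1) → Set (List α)) (s : ℕ → List (Option α)),
      (∀ n, none ∈ s n) → IsLarge B (⋃ i, E' i) s →
      ∃ (i : Fin (r + 1)) (t : ℕ → List (Option α)),
        Extracted B s t ∧ IsLarge B (E' i) t := by
  intro r
  induction r with
  | zero =>
    intro E' s hs h
    refine ⟨0, s, extracted_refl hs, isLarge_mono ?_ h⟩
    refine Set.iUnion_subset fun i => ?_
    have : i = 0 := Fin.eq_of_val_eq (by omega)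
    rw [this]
  | succ r ih =>
    intro E' s hs h
    have hsub : (⋃ i, E' i) ⊆ (⋃ i : Fin (r + 1), E' i.castSucc) ∪ E' (Fin.last (r + 1)) := by
      refine Set.iUnion_subset fun i => ?_
      induction i using Fin.lastCases with
      | last => exact Set.subset_union_of_subset_right le_rfl _
      | cast i =>
        exact Set.subset_union_of_subset_left (Set.subset_iUnion (fun j : Fin (r+1) => E' j.castSucc) i) _
    obtain ⟨t, hts, hcase⟩ := pair_lemma hB hs (isLarge_mono hsub h)
    cases hcase with
    | inr h1 => exact ⟨Fin.last (r + 1), t, hts, h1⟩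
    | inl h0 =>
      obtain ⟨i, u, hut, hl⟩ := ih (fun i => E' i.castSucc) t (none_mem_of_extracted hts) h0
      exact ⟨i.castSucc, u, extracted_trans hB hs hts hut, hl⟩

end HJ







open HJ in
/-- If a `k`-large set is partitioned into finitely many pieces, some piece is
`k`-large in some extracted `k`-subsequence. -/
theorem stmt12 {α : Type*} (A : ℕ → Finset α) (hmono : Monotone A)
    (hne : ∀ n, (A n).Nonempty) (k : ℕ)
    (E : Set (List α)) (hE : E ⊆ WordsOver (⋃ n, (A n : Set α)))
    (s : ℕ → List (Option α)) (hs : ∀ n, IsVarWord (⋃ n, (A n : Set α)) (s n))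
    (hlarge : IsLarge (fun n => (A (k + n) : Set α)) E s)
    (r : ℕ) (hr : 2 ≤ r) (E' : Fin r → Set (List α)) (hE' : E = ⋃ i, E' i) :
    ∃ (i : Fin r) (t : ℕ → List (Option α)),
      Extracted (fun n => (A (k + n) : Set α)) s t ∧
      IsLarge (fun n => (A (k + n) : Set α)) (E' i) t := by
  rcases r with _ | r'
  · omega
  have hB : Monotone (fun n => ((A (k + n) : Finset α) : Set α)) :=
    fun a b hab => Finset.coe_subset.mpr (hmono (by omega))
  have hsn : ∀ n, none ∈ s n := fun n => (hs n).2
  rw [hE'] at hlarge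
  exact main_lemma hB r' E' s hsn hlarge
end
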